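/- arXiv:2012.06313 — 4 statements merged into one kernel-verified Lean document; each statement's English description precedes it below -/
import Mathlib

section
/- For every ε > 0 there is a constant C(ε) such that for all N ≥ 1 and all complex sequences (a_k), ∫_0^{2π} |Σ_{k=0}^{N−1} a_k e^{−i t k(k+1)}|⁴ dt ≤ C(ε) N^ε (Σ_{k=0}^{N−1} |a_k|²)². -/
open Complex Real

lemma orth (j : ℤ) : (∫ t in (0:ℝ)..(2*π), Complex.exp (Complex.I * j * t)) =
    if j = 0 then ((2*π:ℝ) : ℂ) else 0 := by
  split_ifs with h
  · simp [h]
  · have hc : (Complex.I * j : ℂ) ≠ 0 := by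
      simp [Complex.I_ne_zero, Complex.ext_iff, h]
    rw [integral_exp_mul_complex hc]
    have : Complex.exp (Complex.I * j * (2*π)) = 1 := by
      rw [show (Complex.I * j * (2*π) : ℂ) = j * (2*π*Complex.I) by push_cast; ring]
      exact Complex.exp_int_mul_two_pi_mul_I j
    simp [this]

lemma cont_term (b : ℂ) (j : ℤ) : Continuous fun t : ℝ => b * Complex.exp (Complex.I * j * t) :=
  continuous_const.mul (Complex.continuous_exp.comp (by continuity))

lemma int_term (b : ℂ) (j : ℤ) :
    (∫ t in (0:ℝ)..(2*π), b * Complex.exp (Complex.I * j * t))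
      = b * (if j = 0 then ((2*π:ℝ) : ℂ) else 0) := by
  rw [intervalIntegral.integral_const_mul, orth]

lemma parseval (s : Finset ℕ) (c : ℕ → ℂ) (ν : ℕ → ℤ) (hν : Set.InjOn ν s) :
    (∫ t in (0:ℝ)..(2*π), ‖∑ n ∈ s, c n * Complex.exp (Complex.I * ν n * t)‖^2)
      = 2*π * ∑ n ∈ s, ‖c n‖^2 := by
  set T : ℝ → ℂ := fun t => ∑ n ∈ s, c n * Complex.exp (Complex.I * ν n * t) with hT
  have expand : ∀ t : ℝ, T t * (starRingEnd ℂ) (T t)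
      = ∑ n ∈ s, ∑ m ∈ s, (c n * (starRingEnd ℂ) (c m)) *
          Complex.exp (Complex.I * (ν n - ν m : ℤ) * t) := by
    intro t
    rw [hT]
    simp only [map_sum, map_mul, Finset.sum_mul_sum, ← Complex.exp_conj]
    refine Finset.sum_congr rfl fun n _ => Finset.sum_congr rfl fun m _ => ?_
    have h1 : (starRingEnd ℂ) Complex.I * (starRingEnd ℂ) ((ν m : ℂ)) * (starRingEnd ℂ) ((t:ℝ):ℂ)
        = -(Complex.I * (ν m : ℂ) * t) := by
      simp [Complex.conj_I]
    rw [h1, show c n * Complex.exp (Complex.I * (ν n : ℂ) * t) *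
        ((starRingEnd ℂ) (c m) * Complex.exp (-(Complex.I * (ν m : ℂ) * t)))
        = c n * (starRingEnd ℂ) (c m) * (Complex.exp (Complex.I * (ν n : ℂ) * t) *
          Complex.exp (-(Complex.I * (ν m : ℂ) * t))) from by ring, ← Complex.exp_add]
    congr 2
    push_cast
    ring
  have key : (∫ t in (0:ℝ)..(2*π), T t * (starRingEnd ℂ) (T t))
      = ((2*π * ∑ n ∈ s, ‖c n‖^2 : ℝ) : ℂ) := by
    calc (∫ t in (0:ℝ)..(2*π), T t * (starRingEnd ℂ) (T t))
        = ∫ t in (0:ℝ)..(2*π), ∑ n ∈ s, ∑ m ∈ s,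
            (c n * (starRingEnd ℂ) (c m)) * Complex.exp (Complex.I * (ν n - ν m : ℤ) * t) := by
          simp_rw [expand]
      _ = ∑ n ∈ s, ∑ m ∈ s, ∫ t in (0:ℝ)..(2*π),
            (c n * (starRingEnd ℂ) (c m)) * Complex.exp (Complex.I * (ν n - ν m : ℤ) * t) := by
          rw [intervalIntegral.integral_finset_sum (fun n _ =>
            (continuous_finset_sum _ fun m _ => cont_term _ _).intervalIntegrable _ _)]
          exact Finset.sum_congr rfl fun n _ => intervalIntegral.integral_finset_sum
            (fun m _ => (cont_term _ _).intervalIntegrable _ _)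
      _ = ∑ n ∈ s, ∑ m ∈ s, (c n * (starRingEnd ℂ) (c m)) *
            (if (ν n - ν m : ℤ) = 0 then ((2*π:ℝ):ℂ) else 0) := by
          exact Finset.sum_congr rfl fun n _ => Finset.sum_congr rfl fun m _ => int_term _ _
      _ = ((2*π * ∑ n ∈ s, ‖c n‖^2 : ℝ) : ℂ) := by
          push_cast
          rw [Finset.mul_sum]
          refine Finset.sum_congr rfl fun n hn => ?_
          rw [Finset.sum_eq_single n]
          · simp only [sub_self, if_pos rfl, Complex.mul_conj, Complex.normSq_eq_norm_sq]
            push_cast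
            ring
          · intro m hm hmn
            have hne : ν n - ν m ≠ 0 := by
              intro h0
              exact hmn (hν hm hn (sub_eq_zero.mp h0).symm)
            simp [hne]
          · intro h; exact absurd hn h
  have hTsq : ∀ t : ℝ, ((‖T t‖^2 : ℝ) : ℂ) = T t * (starRingEnd ℂ) (T t) := by
    intro t
    rw [Complex.mul_conj, Complex.normSq_eq_norm_sq]
  have : ((∫ t in (0:ℝ)..(2*π), ‖T t‖^2 : ℝ) : ℂ)
      = ((2*π * ∑ n ∈ s, ‖c n‖^2 : ℝ) : ℂ) := by
    rw [← key, ← intervalIntegral.integral_ofReal]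
    exact intervalIntegral.integral_congr fun t _ => hTsq t
  exact_mod_cast this

noncomputable section

abbrev gz (k ℓ : ℕ) : GaussianInt := ⟨(k:ℤ)+ℓ+1, (k:ℤ)-ℓ⟩

lemma gz_norm (k ℓ : ℕ) : (gz k ℓ).norm = 2*(k*(k+1)+ℓ*(ℓ+1)) + 1 := by
  simp [Zsqrtd.norm, gz]
  push_cast
  ring

lemma gz_ne_zero (k ℓ : ℕ) : gz k ℓ ≠ 0 := by
  intro h
  have := congrArg Zsqrtd.re h
  simp [gz] at this
  omega

lemma gz_inj {k ℓ k' ℓ' : ℕ} (h : Associated (gz k ℓ) (gz k' ℓ')) : k = k' ∧ ℓ = ℓ' := by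
  obtain ⟨u, hu⟩ := h
  have hnorm : ((u:GaussianInt).norm).natAbs = 1 := Zsqrtd.norm_eq_one_iff.mpr u.isUnit
  set a := (u:GaussianInt).re with ha
  set b := (u:GaussianInt).im with hb
  have hab : a*a + b*b = 1 := by
    have h0 : (u:GaussianInt).norm = a*a + b*b := by simp [Zsqrtd.norm]; try ring
    have h1 : 0 ≤ (u:GaussianInt).norm := Zsqrtd.norm_nonneg (by norm_num) _
    omega
  have hre := congrArg Zsqrtd.re hu
  have him := congrArg Zsqrtd.im hu
  simp only [Zsqrtd.re_mul, Zsqrtd.im_mul, gz] at hre him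
  rw [← ha, ← hb] at hre him
  clear_value a b
  clear ha hb hnorm hu
  have ha1 : a ≤ 1 := by nlinarith
  have ha2 : -1 ≤ a := by nlinarith
  interval_cases a <;>
    [skip; skip; skip] <;>
    first
      | (have hb1 : b = 1 ∨ b = -1 := by
          have : b*b = 1 := by omega
          have : b ≤ 1 := by nlinarith
          have : -1 ≤ b := by nlinarith
          omega
         rcases hb1 with rfl | rfl <;> (norm_num at hre him; constructor <;> omega))
      | (have hb0 : b = 0 := by nlinarith
         subst hb0
         norm_num at hre him
         constructor <;> omega)

lemma linear_le_exp {c : ℝ} (hc : 0 < c) (x : ℝ) (hx : 0 ≤ x) :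
    x + 1 ≤ (1 + 1/c) * Real.exp (c * x) := by
  have h1 : 1 + c * x ≤ Real.exp (c * x) := by linarith [Real.add_one_le_exp (c * x)]
  have h2 : (0:ℝ) < 1 + 1/c := by positivity
  have h3 : (1 + 1/c) * (1 + c*x) ≤ (1 + 1/c) * Real.exp (c*x) :=
    mul_le_mul_of_nonneg_left h1 h2.le
  have h4 : x + 1 ≤ (1 + 1/c) * (1 + c*x) := by
    have : (1 + 1/c) * (1 + c*x) = 1 + c*x + 1/c + x := by
      field_simp
      ring
    rw [this]
    linarith [mul_nonneg hc.le hx, (one_div_pos.mpr hc).le]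
  linarith

lemma factor_bound {δ' : ℝ} (hδ' : 0 < δ') (q e P : ℕ) (hq : 2 ≤ q)
    (hP : (2:ℝ)^(1/δ') ≤ P) :
    ((e+1 : ℕ) : ℝ) ≤ (if q ≤ P then (1 + 1/(δ' * Real.log 2)) else 1)
      * (((q:ℝ)) ^ (e:ℕ)) ^ δ' := by
  have hq0 : (0:ℝ) ≤ q := by positivity
  have hqpow : (((q:ℝ)) ^ (e:ℕ)) ^ δ' = ((q:ℝ) ^ δ') ^ (e:ℕ) := by
    rw [← Real.rpow_natCast ((q:ℝ) ^ δ') e, ← Real.rpow_mul hq0,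
      ← Real.rpow_natCast (q:ℝ) e, ← Real.rpow_mul hq0, mul_comm]
  rw [hqpow]
  split_ifs with hsmall
  · -- small prime case
    have hc : 0 < δ' * Real.log 2 := by
      have := Real.log_pos (by norm_num : (1:ℝ) < 2)
      positivity
    have h1 : ((e+1 : ℕ) : ℝ) ≤ (1 + 1/(δ' * Real.log 2)) * Real.exp ((δ' * Real.log 2) * e) := by
      have := linear_le_exp hc (e:ℝ) (by positivity)
      push_cast
      linarith
    have h2 : Real.exp ((δ' * Real.log 2) * e) = ((2:ℝ) ^ δ') ^ (e:ℕ) := by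
      rw [← Real.rpow_natCast ((2:ℝ) ^ δ') e, ← Real.rpow_mul (by norm_num),
        Real.rpow_def_of_pos (by norm_num)]
      ring_nf
    have h3 : ((2:ℝ) ^ δ') ^ (e:ℕ) ≤ ((q:ℝ) ^ δ') ^ (e:ℕ) := by
      apply pow_le_pow_left₀ (by positivity)
      exact Real.rpow_le_rpow (by norm_num) (by exact_mod_cast hq) hδ'.le
    have h4 : (0:ℝ) ≤ 1 + 1/(δ' * Real.log 2) := by positivity
    calc ((e+1 : ℕ) : ℝ) ≤ (1 + 1/(δ' * Real.log 2)) * Real.exp ((δ' * Real.log 2) * e) := h1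
      _ = (1 + 1/(δ' * Real.log 2)) * ((2:ℝ) ^ δ') ^ (e:ℕ) := by rw [h2]
      _ ≤ (1 + 1/(δ' * Real.log 2)) * ((q:ℝ) ^ δ') ^ (e:ℕ) := by
          exact mul_le_mul_of_nonneg_left h3 h4
  · -- large prime case
    have hq2 : (2:ℝ) ≤ (q:ℝ) ^ δ' := by
      have hPq : (P:ℝ) ≤ (q:ℝ) := by
        have : P < q := by omega
        exact_mod_cast this.le
      have : (2:ℝ)^(1/δ') ≤ (q:ℝ) := le_trans hP hPq
      calc (2:ℝ) = ((2:ℝ)^(1/δ')) ^ δ' := by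
            rw [← Real.rpow_mul (by norm_num), one_div_mul_cancel hδ'.ne', Real.rpow_one]
        _ ≤ (q:ℝ) ^ δ' := Real.rpow_le_rpow (by positivity) this hδ'.le
    have h1 : ((e+1 : ℕ) : ℝ) ≤ (2:ℝ) ^ (e:ℕ) := by
      exact_mod_cast (Nat.lt_two_pow_self (n := e))
    have h2 : (2:ℝ) ^ (e:ℕ) ≤ ((q:ℝ) ^ δ') ^ (e:ℕ) := pow_le_pow_left₀ (by norm_num) hq2 e
    rw [one_mul]
    linarith

open UniqueFactorizationMonoid in
lemma count_reps (δ : ℝ) (hδ : 0 < δ) : ∃ C : ℝ, 1 ≤ C ∧ ∀ (N n : ℕ),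
    ((((Finset.range N) ×ˢ (Finset.range N)).filter
      (fun p => p.1*(p.1+1)+p.2*(p.2+1) = n)).card : ℝ)
      ≤ C * ((2*n+1 : ℕ) : ℝ) ^ δ := by
  classical
  letI : NormalizationMonoid GaussianInt := UniqueFactorizationMonoid.normalizationMonoid.toNormalizationMonoid
  set δ' := δ/2 with hδ'def
  have hδ' : 0 < δ' := by positivity
  set C₀ : ℝ := 1 + 1/(δ' * Real.log 2) with hC₀def
  have hlog : 0 < δ' * Real.log 2 := by
    have := Real.log_pos (by norm_num : (1:ℝ) < 2); positivity
  have hC₀ : 1 ≤ C₀ := by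
    have h : 0 < 1/(δ' * Real.log 2) := by positivity
    rw [hC₀def]
    linarith
  set P : ℕ := ⌈(2:ℝ)^(1/δ')⌉₊ with hPdef
  have hP : (2:ℝ)^(1/δ') ≤ P := Nat.le_ceil _
  refine ⟨C₀ ^ ((2*P+1)^2), one_le_pow₀ hC₀, fun N n => ?_⟩
  set M : ℕ := 2*n+1 with hMdef
  have hM0 : ((M:ℤ) : GaussianInt) ≠ 0 := by
    intro h
    have := congrArg Zsqrtd.re h
    simp only [Zsqrtd.re_intCast, Zsqrtd.re_zero] at this
    omega
  set s := normalizedFactors ((M:ℤ) : GaussianInt) with hsdef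
  set F := ((Finset.range N) ×ˢ (Finset.range N)).filter
      (fun p => p.1*(p.1+1)+p.2*(p.2+1) = n) with hFdef
  have hne : ∀ p : ℕ × ℕ, gz p.1 p.2 ≠ 0 := fun p => gz_ne_zero _ _
  have hdvd : ∀ p : ℕ × ℕ, p ∈ F → gz p.1 p.2 ∣ ((M:ℤ) : GaussianInt) := by
    intro p hp
    have hpn : p.1*(p.1+1)+p.2*(p.2+1) = n := (Finset.mem_filter.mp hp).2
    have key : ((M:ℤ) : GaussianInt) = gz p.1 p.2 * star (gz p.1 p.2) := by
      rw [← Zsqrtd.norm_eq_mul_conj, gz_norm]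
      congr 1
      rw [hMdef, ← hpn]
      push_cast
      ring
    exact Dvd.intro _ key.symm
  have hnf_le : ∀ p ∈ F, normalizedFactors (gz p.1 p.2) ≤ s :=
    fun p hp => (dvd_iff_normalizedFactors_le_normalizedFactors (hne p) hM0).mp (hdvd p hp)
  have hcard : F.card ≤ ∏ pr ∈ s.toFinset, (s.count pr + 1) := by
    have hmain := Finset.card_le_card_of_injOn
      (f := fun (p : ℕ × ℕ) => fun (pr : GaussianInt) (_ : pr ∈ s.toFinset) =>
        (normalizedFactors (gz p.1 p.2)).count pr)
      (s := F) (t := s.toFinset.pi fun pr => Finset.range (s.count pr + 1)) ?_ ?_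
    · simpa [Finset.card_pi] using hmain
    · intro p hp
      rw [Finset.mem_coe, Finset.mem_pi]
      intro pr hπ
      rw [Finset.mem_range, Nat.lt_succ_iff]
      exact Multiset.count_le_of_le pr (hnf_le p hp)
    · intro p hp p' hp' hfe
      have hnf : normalizedFactors (gz p.1 p.2) = normalizedFactors (gz p'.1 p'.2) := by
        ext pr
        by_cases hπ : pr ∈ s.toFinset
        · exact congrFun (congrFun hfe pr) hπ
        · have h0 : s.count pr = 0 := by
            rw [Multiset.count_eq_zero]
            exact fun hmem => hπ (Multiset.mem_toFinset.mpr hmem)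
          have h1 := Multiset.count_le_of_le pr (hnf_le p hp)
          have h2 := Multiset.count_le_of_le pr (hnf_le p' hp')
          omega
      have hassoc : Associated (gz p.1 p.2) (gz p'.1 p'.2) :=
        ((prod_normalizedFactors (hne p)).symm.trans
          (hnf ▸ prod_normalizedFactors (hne p')))
      obtain ⟨h1, h2⟩ := gz_inj hassoc
      exact Prod.ext h1 h2
  set q : GaussianInt → ℕ := fun pr => (Zsqrtd.norm pr).natAbs with hqdef
  have hq2 : ∀ pr ∈ s.toFinset, 2 ≤ q pr := by
    intro pr hπ
    have hprime : Prime pr := prime_of_normalized_factor pr (Multiset.mem_toFinset.mp hπ)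
    have h0 : pr ≠ 0 := hprime.ne_zero
    have h1 : ¬ IsUnit pr := hprime.not_unit
    have hn0 : Zsqrtd.norm pr ≠ 0 := fun h => h0 ((Zsqrtd.norm_eq_zero_iff (by norm_num) pr).mp h)
    have hn1 : (Zsqrtd.norm pr).natAbs ≠ 1 := fun h => h1 (Zsqrtd.norm_eq_one_iff.mp h)
    have hn0' : (Zsqrtd.norm pr).natAbs ≠ 0 := fun h => hn0 (Int.natAbs_eq_zero.mp h)
    have hqr : q pr = (Zsqrtd.norm pr).natAbs := rfl
    omega
  have hprodM : ∏ pr ∈ s.toFinset, (q pr) ^ (s.count pr) = M^2 := by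
    set Φ : GaussianInt →* ℕ := (Int.natAbsHom.toMonoidHom).comp Zsqrtd.normMonoidHom with hΦdef
    have h1 : ∏ pr ∈ s.toFinset, (q pr) ^ (s.count pr) = Φ (∏ pr ∈ s.toFinset, pr ^ s.count pr) := by
      rw [map_prod]
      exact Finset.prod_congr rfl fun pr _ => by rw [map_pow]; rfl
    have h2 : (∏ pr ∈ s.toFinset, pr ^ s.count pr) = s.prod := (Finset.prod_multiset_count s).symm
    obtain ⟨u, hu⟩ := prod_normalizedFactors hM0
    have hΦu : Φ (u : GaussianInt) = 1 := Nat.isUnit_iff.mp (u.isUnit.map Φ)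
    have h4 : Φ ((M:ℤ) : GaussianInt) = M^2 := by
      show (Zsqrtd.norm ((M:ℤ):GaussianInt)).natAbs = M^2
      rw [Zsqrtd.norm_intCast, Int.natAbs_mul]
      simp [sq]
    have h5 : Φ ((normalizedFactors ((M:ℤ):GaussianInt)).prod) = M^2 := by
      have h6 := congrArg Φ hu
      rwa [map_mul, hΦu, mul_one, h4] at h6
    rw [h1, h2]
    exact h5
  have small_card : (s.toFinset.filter (fun pr => q pr ≤ P)).card ≤ (2*P+1)^2 := by
    have hinj := Finset.card_le_card_of_injOn
      (f := fun pr : GaussianInt => (pr.re, pr.im))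
      (s := s.toFinset.filter (fun pr => q pr ≤ P))
      (t := (Finset.Icc (-(P:ℤ)) (P:ℤ)) ×ˢ (Finset.Icc (-(P:ℤ)) (P:ℤ))) ?_ ?_
    · calc (s.toFinset.filter (fun pr => q pr ≤ P)).card
          ≤ ((Finset.Icc (-(P:ℤ)) (P:ℤ)) ×ˢ (Finset.Icc (-(P:ℤ)) (P:ℤ))).card := hinj
        _ = (2*P+1)^2 := by
            rw [Finset.card_product, Int.card_Icc]
            have : ((P:ℤ) + 1 - -(P:ℤ)).toNat = 2*P+1 := by omega
            rw [this, sq]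
    · intro pr hπ
      obtain ⟨hmem, hsmall⟩ := Finset.mem_filter.mp hπ
      have hnn : 0 ≤ Zsqrtd.norm pr := Zsqrtd.norm_nonneg (by norm_num) pr
      have hle : Zsqrtd.norm pr ≤ (P:ℤ) := by
        rw [← Int.natAbs_of_nonneg hnn]
        exact_mod_cast hsmall
      have hnormval : Zsqrtd.norm pr = pr.re*pr.re + pr.im*pr.im := by
        simp [Zsqrtd.norm]; try ring
      rw [Finset.mem_coe, Finset.mem_product, Finset.mem_Icc, Finset.mem_Icc]
      constructor
      · constructor <;> nlinarith [sq_nonneg pr.re, sq_nonneg pr.im, sq_nonneg (pr.re+pr.im)]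
      · constructor <;> nlinarith [sq_nonneg pr.re, sq_nonneg pr.im, sq_nonneg (pr.re+pr.im)]
    · intro pr _ pr' _ h
      have h1 := congrArg Prod.fst h
      have h2 := congrArg Prod.snd h
      simp only at h1 h2
      exact Zsqrtd.ext h1 h2
  have step4 : (∏ pr ∈ s.toFinset, (if q pr ≤ P then C₀ else 1)) ≤ C₀ ^ ((2*P+1)^2) := by
    rw [← Finset.prod_filter_mul_prod_filter_not s.toFinset (fun pr => q pr ≤ P)]
    have e1 : ∏ pr ∈ s.toFinset.filter (fun pr => q pr ≤ P), (if q pr ≤ P then C₀ else 1)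
        = C₀ ^ (s.toFinset.filter (fun pr => q pr ≤ P)).card := by
      rw [Finset.prod_congr rfl (fun pr hπ => if_pos (Finset.mem_filter.mp hπ).2),
        Finset.prod_const]
    have e2 : ∏ pr ∈ s.toFinset.filter (fun pr => ¬ (q pr ≤ P)), (if q pr ≤ P then C₀ else 1) = 1 :=
      Finset.prod_eq_one (fun pr hπ => if_neg (Finset.mem_filter.mp hπ).2)
    rw [e1, e2, mul_one]
    exact pow_le_pow_right₀ hC₀ small_card
  -- assemble
  have step1 : (F.card : ℝ) ≤ ∏ pr ∈ s.toFinset, ((s.count pr + 1 : ℕ) : ℝ) := by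
    rw [← Nat.cast_prod]
    exact_mod_cast hcard
  have step2 : ∏ pr ∈ s.toFinset, ((s.count pr + 1 : ℕ) : ℝ)
      ≤ ∏ pr ∈ s.toFinset, ((if q pr ≤ P then C₀ else 1) * (((q pr:ℝ)) ^ (s.count pr)) ^ δ') := by
    apply Finset.prod_le_prod
    · intro pr _; positivity
    · intro pr hπ
      exact factor_bound hδ' (q pr) (s.count pr) P (hq2 pr hπ) hP
  have step5 : ∏ pr ∈ s.toFinset, ((((q pr):ℝ)) ^ (s.count pr)) ^ δ' = ((M:ℝ) ^ (2:ℕ)) ^ δ' := by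
    rw [Real.finset_prod_rpow _ _ (fun pr _ => by positivity) δ']
    congr 1
    have hcast : ∏ pr ∈ s.toFinset, ((q pr:ℝ)) ^ (s.count pr)
        = ((∏ pr ∈ s.toFinset, (q pr) ^ (s.count pr) : ℕ) : ℝ) := by push_cast; rfl
    rw [hcast, hprodM]
    push_cast
    ring
  have hMrpow : ((M:ℝ) ^ (2:ℕ)) ^ δ' = ((M:ℕ):ℝ) ^ δ := by
    rw [← Real.rpow_natCast (M:ℝ) 2, ← Real.rpow_mul (by positivity)]
    norm_num
    rw [hδ'def]
    ring_nf
  calc (F.card : ℝ) ≤ ∏ pr ∈ s.toFinset, ((s.count pr + 1 : ℕ) : ℝ) := step1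
    _ ≤ ∏ pr ∈ s.toFinset, ((if q pr ≤ P then C₀ else 1) * (((q pr:ℝ)) ^ (s.count pr)) ^ δ') := step2
    _ = (∏ pr ∈ s.toFinset, (if q pr ≤ P then C₀ else 1)) *
        ∏ pr ∈ s.toFinset, ((((q pr):ℝ)) ^ (s.count pr)) ^ δ' := Finset.prod_mul_distrib
    _ ≤ C₀ ^ ((2*P+1)^2) * ((M:ℕ):ℝ) ^ δ := by
        rw [step5, hMrpow]
        apply mul_le_mul_of_nonneg_right step4 (by positivity)

theorem stmt_5 (ε : ℝ) (hε : 0 < ε) :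
    ∃ C : ℝ, 0 < C ∧ ∀ N : ℕ, 1 ≤ N → ∀ a : ℕ → ℂ,
      (∫ t in (0:ℝ)..(2*π),
          ‖∑ k ∈ Finset.range N, a k * Complex.exp (-Complex.I * t * (k * (k+1)))‖^4)
        ≤ C * (N : ℝ) ^ ε * (∑ k ∈ Finset.range N, ‖a k‖^2)^2 := by
  classical
  obtain ⟨C₁, hC₁, hcount⟩ := count_reps (ε/2) (by positivity)
  set C₂ : ℝ := C₁ * (4:ℝ) ^ (ε/2) with hC₂def
  have hC₂ : 0 < C₂ := by
    have h4 : (0:ℝ) < (4:ℝ) ^ (ε/2) := Real.rpow_pos_of_pos (by norm_num) _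
    nlinarith
  refine ⟨2*π*C₂, by positivity, fun N hN a => ?_⟩
  set f : ℕ × ℕ → ℕ := fun p => p.1*(p.1+1)+p.2*(p.2+1) with hfdef
  set K := 2*N*N with hK
  set Fn : ℕ → Finset (ℕ × ℕ) := fun n =>
    (Finset.range N ×ˢ Finset.range N).filter (fun p => f p = n) with hFndef
  set c : ℕ → ℂ := fun n => ∑ p ∈ Fn n, a p.1 * a p.2 with hcdef
  have hmaps : ∀ p ∈ Finset.range N ×ˢ Finset.range N, f p ∈ Finset.range K := by
    intro p hp
    rw [Finset.mem_product, Finset.mem_range, Finset.mem_range] at hp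
    rw [Finset.mem_range, hK, hfdef]
    obtain ⟨h1, h2⟩ := hp
    nlinarith
  have hsq : ∀ t : ℝ,
      (∑ k ∈ Finset.range N, a k * Complex.exp (-Complex.I * t * (k * (k+1))))^2
      = ∑ n ∈ Finset.range K, c n * Complex.exp (Complex.I * ((-(n:ℤ) : ℤ) : ℂ) * t) := by
    intro t
    rw [sq, Finset.sum_mul_sum, ← Finset.sum_product', ← Finset.sum_fiberwise_of_maps_to hmaps]
    refine Finset.sum_congr rfl fun n hn => ?_
    rw [hcdef, Finset.sum_mul]
    refine Finset.sum_congr rfl fun p hp => ?_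
    have hpn : f p = n := (Finset.mem_filter.mp hp).2
    rw [← hpn, mul_mul_mul_comm, ← Complex.exp_add]
    congr 1
    rw [hfdef]
    push_cast
    ring
  have hinj : Set.InjOn (fun n : ℕ => -(n:ℤ)) (Finset.range K) := by
    intro x _ y _ h
    simp only [neg_inj, Int.natCast_inj] at h
    exact h
  have hpars := parseval (Finset.range K) c (fun n => -(n:ℤ)) hinj
  have h1 : (∫ t in (0:ℝ)..(2*π),
      ‖∑ k ∈ Finset.range N, a k * Complex.exp (-Complex.I * t * (k * (k+1)))‖^4)
      = ∫ t in (0:ℝ)..(2*π),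
        ‖∑ n ∈ Finset.range K, c n * Complex.exp (Complex.I * ((-(n:ℤ):ℤ)  : ℂ) * t)‖^2 := by
    refine intervalIntegral.integral_congr fun t _ => ?_
    rw [← hsq t, norm_pow]
    ring
  rw [h1, hpars]
  -- weights
  have hw : ∀ n, ‖c n‖^2 ≤ (C₂ * (N:ℝ)^ε) * ∑ p ∈ Fn n, ‖a p.1‖^2 * ‖a p.2‖^2 := by
    intro n
    have hCS : ‖c n‖^2 ≤ ((Fn n).card : ℝ) * ∑ p ∈ Fn n, ‖a p.1‖^2 * ‖a p.2‖^2 := by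
      calc ‖c n‖^2 ≤ (∑ p ∈ Fn n, ‖a p.1 * a p.2‖)^2 := by
            apply pow_le_pow_left₀ (norm_nonneg _) (norm_sum_le _ _)
        _ ≤ ((Fn n).card : ℝ) * ∑ p ∈ Fn n, ‖a p.1 * a p.2‖^2 := sq_sum_le_card_mul_sum_sq
        _ = ((Fn n).card : ℝ) * ∑ p ∈ Fn n, ‖a p.1‖^2 * ‖a p.2‖^2 := by
            congr 1
            exact Finset.sum_congr rfl fun p _ => by rw [norm_mul, mul_pow]
    have hcf : ((Fn n).card : ℝ) ≤ C₂ * (N:ℝ)^ε := by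
      have hNpow : ((4*N^2 : ℕ):ℝ)^(ε/2) = (4:ℝ)^(ε/2) * (N:ℝ)^ε := by
        push_cast
        rw [Real.mul_rpow (by norm_num) (by positivity), ← Real.rpow_natCast (N:ℝ) 2,
          ← Real.rpow_mul (by positivity)]
        congr 1
        push_cast
        ring
      rcases Finset.eq_empty_or_nonempty (Fn n) with he | ⟨p, hp⟩
      · rw [he]
        simp only [Finset.card_empty, Nat.cast_zero]
        positivity
      · have hpmem := Finset.mem_filter.mp hp
        have hfp : f p = n := hpmem.2
        obtain ⟨hp1, hp2⟩ := Finset.mem_product.mp hpmem.1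
        rw [Finset.mem_range] at hp1 hp2
        have hn4 : (2*n+1 : ℕ) ≤ 4*N^2 := by
          rw [← hfp, hfdef]
          nlinarith
        calc ((Fn n).card : ℝ) ≤ C₁ * ((2*n+1 : ℕ):ℝ)^(ε/2) := hcount N n
          _ ≤ C₁ * ((4*N^2 : ℕ):ℝ)^(ε/2) := by
              apply mul_le_mul_of_nonneg_left _ (by linarith)
              exact Real.rpow_le_rpow (by positivity) (by exact_mod_cast hn4) (by positivity)
          _ = C₂ * (N:ℝ)^ε := by rw [hNpow, hC₂def]; ring
    calc ‖c n‖^2 ≤ ((Fn n).card : ℝ) * ∑ p ∈ Fn n, ‖a p.1‖^2 * ‖a p.2‖^2 := hCS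
      _ ≤ (C₂ * (N:ℝ)^ε) * ∑ p ∈ Fn n, ‖a p.1‖^2 * ‖a p.2‖^2 := by
          apply mul_le_mul_of_nonneg_right hcf
          positivity
  calc 2*π * ∑ n ∈ Finset.range K, ‖c n‖^2
      ≤ 2*π * ∑ n ∈ Finset.range K, ((C₂ * (N:ℝ)^ε) * ∑ p ∈ Fn n, ‖a p.1‖^2 * ‖a p.2‖^2) := by
        apply mul_le_mul_of_nonneg_left (Finset.sum_le_sum fun n _ => hw n) (by positivity)
    _ = 2*π*C₂ * (N:ℝ)^ε * ∑ n ∈ Finset.range K, ∑ p ∈ Fn n, ‖a p.1‖^2 * ‖a p.2‖^2 := by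
        rw [← Finset.mul_sum]
        ring
    _ = 2*π*C₂ * (N:ℝ)^ε * (∑ k ∈ Finset.range N, ‖a k‖^2)^2 := by
        rw [Finset.sum_fiberwise_of_maps_to hmaps]
        congr 1
        rw [sq, Finset.sum_mul_sum, ← Finset.sum_product']

end
end

section
/- There exist constants 0 < c ≤ C such that for every finitely supported complex sequence (c_k)_{k≥1}, c Σ_{k≥1} |c_k|² ≤ (1/2π) ∫_0^{2π} |Σ_{k≥1} c_k e^{i t √(k(k+1))}|² dt ≤ C Σ_{k≥1} |c_k|². -/
open Complex Real

set_option maxHeartbeats 1000000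


lemma norm_exp_mul_I_sub_one (x : ℝ) : ‖Complex.exp (x * Complex.I) - 1‖ ≤ |x| := by
  have h1 : ‖Complex.exp (x * Complex.I) - 1‖^2 ≤ x^2 := by
    rw [Complex.sq_norm, Complex.normSq_apply]
    simp only [Complex.sub_re, Complex.sub_im, Complex.one_re, Complex.one_im,
      Complex.exp_ofReal_mul_I_re, Complex.exp_ofReal_mul_I_im]
    have h2 := Real.one_sub_sq_div_two_le_cos (x := x)
    nlinarith [Real.sin_sq_add_cos_sq x]
  nlinarith [norm_nonneg (Complex.exp (x * Complex.I) - 1), abs_nonneg x, _root_.sq_abs x]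

lemma norm_exp_sub_exp (t μ ν : ℝ) :
    ‖Complex.exp (Complex.I * t * μ) - Complex.exp (Complex.I * t * ν)‖ ≤ |t| * |μ - ν| := by
  have h1 : Complex.exp (Complex.I * t * μ) - Complex.exp (Complex.I * t * ν)
      = Complex.exp (Complex.I * t * ν) * (Complex.exp ((t*(μ-ν) : ℝ) * Complex.I) - 1) := by
    rw [mul_sub, mul_one, ← Complex.exp_add]
    push_cast
    ring_nf
  rw [h1, norm_mul]
  have h2 : ‖Complex.exp (Complex.I * ↑t * ↑ν)‖ = 1 := by
    rw [show Complex.I * t * ν = ((t*ν : ℝ) : ℂ) * Complex.I by push_cast; ring]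
    exact Complex.norm_exp_ofReal_mul_I _
  rw [h2, one_mul]
  calc ‖Complex.exp ((t*(μ-ν) : ℝ) * Complex.I) - 1‖ ≤ |t*(μ-ν)| := norm_exp_mul_I_sub_one _
    _ = |t| * |μ - ν| := abs_mul _ _


lemma sqrt_near (k : ℕ) (hk : 1 ≤ k) :
    |Real.sqrt ((k:ℝ) * (k+1)) - ((k:ℝ) + 1/2)| ≤ 1/(8*(k:ℝ)+2) := by
  have hk1 : (1:ℝ) ≤ k := by exact_mod_cast hk
  have h0 : (0:ℝ) ≤ (k:ℝ) * ((k:ℝ)+1) := by positivity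
  have hup : Real.sqrt ((k:ℝ) * (k+1)) ≤ (k:ℝ) + 1/2 := by
    rw [show (k:ℝ) + 1/2 = Real.sqrt (((k:ℝ)+1/2)^2) by
      rw [Real.sqrt_sq (by positivity)]]
    apply Real.sqrt_le_sqrt
    nlinarith
  have hlo : (k:ℝ) + 1/2 - 1/(8*(k:ℝ)+2) ≤ Real.sqrt ((k:ℝ) * (k+1)) := by
    have hpos : (0:ℝ) ≤ (k:ℝ) + 1/2 - 1/(8*(k:ℝ)+2) := by
      have : 1/(8*(k:ℝ)+2) ≤ 1 := by
        rw [div_le_one (by positivity)]; linarith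
      linarith
    rw [show Real.sqrt ((k:ℝ) * (k+1)) = Real.sqrt ((k:ℝ) * ((k:ℝ)+1)) by norm_num]
    rw [show ((k:ℝ) + 1/2 - 1/(8*(k:ℝ)+2)) = Real.sqrt (((k:ℝ) + 1/2 - 1/(8*(k:ℝ)+2))^2) by
      rw [Real.sqrt_sq hpos]]
    apply Real.sqrt_le_sqrt
    have e1 : (0:ℝ) < 8*(k:ℝ)+2 := by linarith
    have key : (1/(8*(k:ℝ)+2))^2 ≤ 1/(2*(8*(k:ℝ)+2)) := by
      rw [div_pow, one_pow]
      apply one_div_le_one_div_of_le (by positivity)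
      nlinarith
    have h2ab : 2*((k:ℝ)+1/2)*(1/(8*(k:ℝ)+2)) = 1/4 + 1/(2*(8*(k:ℝ)+2)) := by
      field_simp
      ring
    nlinarith [sq_nonneg (1/(8*(k:ℝ)+2))]
  rw [abs_le]
  constructor <;> [linarith; linarith]

lemma sum_inv_sq_Icc (N : ℕ) (hN : 1 ≤ N) :
    ∑ k ∈ Finset.Icc 1 N, (1/(8*(k:ℝ)+2))^2 ≤ 9/400 - (1/8)*(1/(8*(N:ℝ)+2)) := by
  induction N, hN using Nat.le_induction with
  | base => norm_num
  | succ N hN ih =>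
    rw [Finset.sum_Icc_succ_top (by omega)]
    have hx : (1:ℝ) ≤ (N:ℝ) := by exact_mod_cast hN
    have e1 : (0:ℝ) < 8*(N:ℝ)+2 := by linarith
    have e2 : (0:ℝ) < 8*(N:ℝ)+10 := by linarith
    have key : (1/(8*((N:ℝ)+1)+2))^2 ≤ (1/8)*(1/(8*(N:ℝ)+2)) - (1/8)*(1/(8*((N:ℝ)+1)+2)) := by
      have h3 : (1/8)*(1/(8*(N:ℝ)+2)) - (1/8)*(1/(8*(N:ℝ)+10)) = 1/((8*(N:ℝ)+2)*(8*(N:ℝ)+10)) := by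
        field_simp; ring
      have h4 : (1/(8*(N:ℝ)+10))^2 ≤ 1/((8*(N:ℝ)+2)*(8*(N:ℝ)+10)) := by
        rw [div_pow, one_pow]
        apply one_div_le_one_div_of_le (by positivity)
        nlinarith
      calc (1/(8*((N:ℝ)+1)+2))^2 = (1/(8*(N:ℝ)+10))^2 := by ring_nf
        _ ≤ _ := h4
        _ = (1/8)*(1/(8*(N:ℝ)+2)) - (1/8)*(1/(8*((N:ℝ)+1)+2)) := by
              rw [← h3]; ring_nf
    push_cast
    push_cast at ih key
    linarith


lemma ortho (s : Finset ℕ) (cf : ℕ → ℂ) :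
    (∫ t in (0:ℝ)..(2*π),
        ‖∑ k ∈ s, cf k * Complex.exp (Complex.I * t * ((k:ℝ) + 1/2))‖^2)
      = 2*π * ∑ k ∈ s, ‖cf k‖^2 := by
  have hcont : ∀ (c : ℂ) (d : ℝ), Continuous fun t : ℝ => c * Complex.exp ((Complex.I * d) * t) := by
    intro c d
    exact continuous_const.mul (Complex.continuous_exp.comp (continuous_const.mul Complex.continuous_ofReal))
  have hpt : ∀ t : ℝ, ‖∑ k ∈ s, cf k * Complex.exp (Complex.I * t * ((k:ℝ) + 1/2))‖^2
      = ∑ j ∈ s, ∑ k ∈ s,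
          ((cf j * (starRingEnd ℂ) (cf k)) * Complex.exp ((Complex.I * ((j:ℝ) - (k:ℝ))) * t)).re := by
    intro t
    set z := ∑ k ∈ s, cf k * Complex.exp (Complex.I * t * ((k:ℝ) + 1/2)) with hz
    have h1 : z * (starRingEnd ℂ) z
        = ∑ j ∈ s, ∑ k ∈ s,
            (cf j * (starRingEnd ℂ) (cf k)) * Complex.exp ((Complex.I * ((j:ℝ) - (k:ℝ))) * t) := by
      rw [hz, map_sum, Finset.sum_mul_sum]
      refine Finset.sum_congr rfl fun j hj => Finset.sum_congr rfl fun k hk => ?_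
      rw [map_mul, ← Complex.exp_conj]
      have hc : (starRingEnd ℂ) (Complex.I * t * ((k:ℝ) + 1/2)) = -(Complex.I * t * ((k:ℝ) + 1/2)) := by
        rw [show Complex.I * t * (((k:ℝ):ℂ) + 1/2) = (((t*((k:ℝ)+1/2)):ℝ):ℂ) * Complex.I by
          push_cast; ring]
        rw [map_mul, Complex.conj_ofReal, Complex.conj_I]
        ring
      rw [hc]
      rw [show (cf j * Complex.exp (Complex.I * t * ((j:ℝ) + 1/2))) *
            ((starRingEnd ℂ) (cf k) * Complex.exp (-(Complex.I * t * ((k:ℝ) + 1/2))))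
          = (cf j * (starRingEnd ℂ) (cf k)) *
            (Complex.exp (Complex.I * t * ((j:ℝ) + 1/2)) * Complex.exp (-(Complex.I * t * ((k:ℝ) + 1/2)))) by ring]
      rw [← Complex.exp_add]
      congr 2
      push_cast
      ring
    have h2 : ‖z‖^2 = (z * (starRingEnd ℂ) z).re := by
      rw [Complex.mul_conj, Complex.ofReal_re, Complex.sq_norm]
    rw [h2, h1, Complex.re_sum]
    exact Finset.sum_congr rfl fun j _ => by rw [Complex.re_sum]
  rw [intervalIntegral.integral_congr (fun t _ => hpt t)]
  rw [intervalIntegral.integral_finset_sum (μ := MeasureTheory.volume)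
    (fun j _ => Continuous.intervalIntegrable (by fun_prop) _ _)]
  have hswap : ∀ j ∈ s, (∫ t in (0:ℝ)..(2*π), ∑ k ∈ s,
      ((cf j * (starRingEnd ℂ) (cf k)) * Complex.exp ((Complex.I * ((j:ℝ) - (k:ℝ))) * t)).re)
      = 2*π * ‖cf j‖^2 := by
    intro j hj
    rw [intervalIntegral.integral_finset_sum (μ := MeasureTheory.volume)
      (fun k _ => Continuous.intervalIntegrable (by fun_prop) _ _)]
    have hterm : ∀ k ∈ s, (∫ t in (0:ℝ)..(2*π),
        ((cf j * (starRingEnd ℂ) (cf k)) * Complex.exp ((Complex.I * ((j:ℝ) - (k:ℝ))) * t)).re)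
        = if k = j then 2*π * ‖cf j‖^2 else 0 := by
      intro k hk
      have hre := ContinuousLinearMap.intervalIntegral_comp_comm Complex.reCLM
        ((hcont (cf j * (starRingEnd ℂ) (cf k)) ((j:ℝ) - (k:ℝ))).intervalIntegrable (μ := MeasureTheory.volume) (0:ℝ) (2*π))
      simp only [Complex.reCLM_apply, Complex.ofReal_sub] at hre
      rw [hre]
      by_cases hjk : k = j
      · subst hjk
        rw [if_pos rfl]
        rw [show ((Complex.I * (((k:ℝ):ℂ) - ((k:ℝ):ℂ)))) = 0 by ring]
        simp only [zero_mul, Complex.exp_zero, mul_one]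
        rw [intervalIntegral.integral_const, Complex.mul_conj]
        simp only [sub_zero, Complex.real_smul, Complex.ofReal_mul]
        simp [← Complex.ofReal_mul, Complex.sq_norm]
      · rw [if_neg hjk]
        have hne : (((j:ℝ)):ℂ) - (((k:ℝ)):ℂ) ≠ 0 := by
          rw [sub_ne_zero]
          exact_mod_cast fun h => hjk (by exact_mod_cast h.symm)
        rw [intervalIntegral.integral_const_mul]
        rw [integral_exp_mul_complex (mul_ne_zero Complex.I_ne_zero hne)]
        have h1 : Complex.exp (Complex.I * ((((j:ℝ)):ℂ) - (((k:ℝ)):ℂ)) * ((2*π : ℝ):ℂ)) = 1 := by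
          rw [show Complex.I * ((((j:ℝ)):ℂ) - (((k:ℝ)):ℂ)) * ((2*π : ℝ):ℂ)
            = (((j:ℤ) - (k:ℤ) : ℤ) : ℂ) * (2*(π:ℂ)*Complex.I) by push_cast; ring]
          exact Complex.exp_int_mul_two_pi_mul_I _
        rw [show Complex.I * ((((j:ℝ)):ℂ) - (((k:ℝ)):ℂ)) * ((0:ℝ):ℂ) = 0 by push_cast; ring]
        rw [h1, Complex.exp_zero]
        simp
    rw [Finset.sum_congr rfl hterm, Finset.sum_ite_eq' s j, if_pos hj]
  rw [Finset.sum_congr rfl fun j hj => by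
    rw [hswap j hj]]
  rw [← Finset.mul_sum]

theorem stmt_8 :
    ∃ c C : ℝ, 0 < c ∧ c ≤ C ∧
      ∀ (s : Finset ℕ) (cf : ℕ → ℂ), (∀ k ∈ s, 1 ≤ k) →
        (c * ∑ k ∈ s, ‖cf k‖^2
          ≤ (1/(2*π)) * ∫ t in (0:ℝ)..(2*π),
              ‖∑ k ∈ s, cf k * Complex.exp (Complex.I * t * Real.sqrt (k * (k+1)))‖^2) ∧
        ((1/(2*π)) * (∫ t in (0:ℝ)..(2*π),
              ‖∑ k ∈ s, cf k * Complex.exp (Complex.I * t * Real.sqrt (k * (k+1)))‖^2)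
          ≤ C * ∑ k ∈ s, ‖cf k‖^2) := by
  have hπ : (0:ℝ) < π := Real.pi_pos
  refine ⟨(1 - (99/1000)*π^2)/11, 11/10 + (99/100)*π^2, ?_, ?_, ?_⟩
  · nlinarith [Real.pi_lt_d2, Real.pi_gt_three]
  · nlinarith [sq_nonneg π]
  intro s cf hs
  set S := ∑ k ∈ s, ‖cf k‖^2 with hS
  have hS0 : 0 ≤ S := Finset.sum_nonneg fun k _ => by positivity
  set F : ℝ → ℂ := fun t => ∑ k ∈ s, cf k * Complex.exp (Complex.I * t * Real.sqrt ((k:ℝ) * ((k:ℝ)+1))) with hF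
  set G : ℝ → ℂ := fun t => ∑ k ∈ s, cf k * Complex.exp (Complex.I * t * ((k:ℝ) + 1/2)) with hG
  -- continuity
  have hFc : Continuous F := continuous_finset_sum s fun k _ => by fun_prop
  have hGc : Continuous G := continuous_finset_sum s fun k _ => by fun_prop
  have hF2 : IntervalIntegrable (fun t => ‖F t‖^2) MeasureTheory.volume 0 (2*π) :=
    ((hFc.norm.pow 2)).intervalIntegrable _ _
  have hG2 : IntervalIntegrable (fun t => ‖G t‖^2) MeasureTheory.volume 0 (2*π) :=
    ((hGc.norm.pow 2)).intervalIntegrable _ _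
  have hD2 : IntervalIntegrable (fun t => ‖F t - G t‖^2) MeasureTheory.volume 0 (2*π) :=
    (((hFc.sub hGc).norm.pow 2)).intervalIntegrable _ _
  -- sum of eps^2
  have hsum : ∑ k ∈ s, (1/(8*(k:ℝ)+2))^2 ≤ 9/400 := by
    have h1 : s ⊆ Finset.Icc 1 (s.sup id) := fun k hk =>
      Finset.mem_Icc.mpr ⟨hs k hk, Finset.le_sup (f := id) hk⟩
    have h2 : ∑ k ∈ s, (1/(8*(k:ℝ)+2))^2 ≤ ∑ k ∈ Finset.Icc 1 (s.sup id), (1/(8*(k:ℝ)+2))^2 :=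
      Finset.sum_le_sum_of_subset_of_nonneg h1 (fun k _ _ => by positivity)
    rcases Nat.eq_zero_or_pos (s.sup id) with h | h
    · rw [h] at h2; simpa using h2.trans (by norm_num)
    · refine h2.trans ((sum_inv_sq_Icc _ h).trans ?_)
      have : (0:ℝ) < 1/(8*((s.sup id : ℕ):ℝ)+2) := by positivity
      linarith
  -- pointwise bound on the difference
  have hDpt : ∀ t ∈ Set.Icc (0:ℝ) (2*π), ‖F t - G t‖^2 ≤ (9*π^2/100) * S := by
    intro t ht
    have h1 : F t - G t = ∑ k ∈ s, cf k *
        (Complex.exp (Complex.I * t * ((Real.sqrt ((k:ℝ) * ((k:ℝ)+1)) : ℝ) : ℂ)) - Complex.exp (Complex.I * t * ((((k:ℝ) + 1/2 : ℝ)) : ℂ))) := by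
      rw [hF, hG, ← Finset.sum_sub_distrib]
      refine Finset.sum_congr rfl fun k _ => ?_
      push_cast
      ring
    have h2 : ‖F t - G t‖ ≤ ∑ k ∈ s, ‖cf k‖ * (2*π*(1/(8*(k:ℝ)+2))) := by
      rw [h1]
      refine (norm_sum_le _ _).trans (Finset.sum_le_sum fun k hk => ?_)
      rw [norm_mul]
      refine mul_le_mul_of_nonneg_left ?_ (norm_nonneg _)
      refine (norm_exp_sub_exp t _ _).trans ?_
      have ht1 : |t| ≤ 2*π := by
        rw [abs_le]; constructor <;> [linarith [ht.1]; linarith [ht.2]]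
      have ht2 : |Real.sqrt ((k:ℝ) * ((k:ℝ)+1)) - ((k:ℝ) + 1/2)| ≤ 1/(8*(k:ℝ)+2) :=
        sqrt_near k (hs k hk)
      exact mul_le_mul ht1 ht2 (abs_nonneg _) (by positivity)
    have h3 : (∑ k ∈ s, ‖cf k‖ * (2*π*(1/(8*(k:ℝ)+2))))^2
        ≤ (∑ k ∈ s, ‖cf k‖^2) * (∑ k ∈ s, (2*π*(1/(8*(k:ℝ)+2)))^2) :=
      Finset.sum_mul_sq_le_sq_mul_sq s _ _
    have h4 : ∑ k ∈ s, (2*π*(1/(8*(k:ℝ)+2)))^2 ≤ 9*π^2/100 := by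
      have : ∑ k ∈ s, (2*π*(1/(8*(k:ℝ)+2)))^2 = (2*π)^2 * ∑ k ∈ s, (1/(8*(k:ℝ)+2))^2 := by
        rw [Finset.mul_sum]; exact Finset.sum_congr rfl fun k _ => by ring
      rw [this]
      calc (2*π)^2 * ∑ k ∈ s, (1/(8*(k:ℝ)+2))^2 ≤ (2*π)^2 * (9/400) :=
            mul_le_mul_of_nonneg_left hsum (by positivity)
        _ = 9*π^2/100 := by ring
    calc ‖F t - G t‖^2 ≤ (∑ k ∈ s, ‖cf k‖ * (2*π*(1/(8*(k:ℝ)+2))))^2 := by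
          apply pow_le_pow_left₀ (norm_nonneg _) h2
      _ ≤ S * (∑ k ∈ s, (2*π*(1/(8*(k:ℝ)+2)))^2) := h3
      _ ≤ S * (9*π^2/100) := mul_le_mul_of_nonneg_left h4 hS0
      _ = (9*π^2/100) * S := by ring
  -- integral of the difference
  set IF := ∫ t in (0:ℝ)..(2*π), ‖F t‖^2 with hIF
  set IG := ∫ t in (0:ℝ)..(2*π), ‖G t‖^2 with hIGdef
  set ID := ∫ t in (0:ℝ)..(2*π), ‖F t - G t‖^2 with hIDdef
  have hIG : IG = 2*π*S := ortho s cf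
  have hID : ID ≤ 2*π*((9*π^2/100) * S) := by
    have := intervalIntegral.integral_mono_on (by positivity : (0:ℝ) ≤ 2*π) hD2
      (intervalIntegrable_const) hDpt
    rw [intervalIntegral.integral_const, smul_eq_mul, sub_zero] at this
    exact this
  have hID0 : 0 ≤ ID := intervalIntegral.integral_nonneg (by positivity) (fun t _ => by positivity)
  -- upper bound
  have hupint : IF ≤ 11/10 * IG + 11 * ID := by
    have hmono := intervalIntegral.integral_mono_on (by positivity : (0:ℝ) ≤ 2*π) hF2
      ((hG2.const_mul (11/10)).add (hD2.const_mul 11))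
      (fun t _ => by
        have h := norm_add_le (G t) (F t - G t)
        rw [add_sub_cancel] at h
        have h2 : ‖F t‖^2 ≤ (‖G t‖ + ‖F t - G t‖)^2 :=
          pow_le_pow_left₀ (norm_nonneg _) h 2
        nlinarith [norm_nonneg (G t), norm_nonneg (F t - G t),
          sq_nonneg (‖G t‖ - 10*‖F t - G t‖)])
    rwa [intervalIntegral.integral_add (hG2.const_mul (11/10)) (hD2.const_mul 11),
      intervalIntegral.integral_const_mul, intervalIntegral.integral_const_mul] at hmono
  -- lower bound
  have hloint : IG ≤ 11 * IF + 11/10 * ID := by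
    have hmono := intervalIntegral.integral_mono_on (by positivity : (0:ℝ) ≤ 2*π) hG2
      ((hF2.const_mul 11).add (hD2.const_mul (11/10)))
      (fun t _ => by
        have h : ‖G t‖ ≤ ‖F t‖ + ‖F t - G t‖ := by
          calc ‖G t‖ = ‖F t - (F t - G t)‖ := by rw [sub_sub_cancel]
            _ ≤ ‖F t‖ + ‖F t - G t‖ := norm_sub_le _ _
        have h2 : ‖G t‖^2 ≤ (‖F t‖ + ‖F t - G t‖)^2 :=
          pow_le_pow_left₀ (norm_nonneg _) h 2
        nlinarith [norm_nonneg (F t), norm_nonneg (F t - G t),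
          sq_nonneg (10*‖F t‖ - ‖F t - G t‖)])
    rwa [intervalIntegral.integral_add (hF2.const_mul 11) (hD2.const_mul (11/10)),
      intervalIntegral.integral_const_mul, intervalIntegral.integral_const_mul] at hmono
  -- conclude
  constructor
  · have key : 2*π*((1 - (99/1000)*π^2)/11 * S) ≤ IF := by
      have h1 : 2*π*S ≤ 11 * IF + 11/10 * (2*π*((9*π^2/100) * S)) := by
        rw [← hIG]; linarith
      nlinarith
    calc (1 - (99/1000)*π^2)/11 * S = (1/(2*π)) * (2*π*((1 - (99/1000)*π^2)/11 * S)) := by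
          field_simp
      _ ≤ (1/(2*π)) * IF := by
          apply mul_le_mul_of_nonneg_left key (by positivity)
  · have key : IF ≤ 2*π*((11/10 + (99/100)*π^2) * S) := by
      nlinarith
    calc (1/(2*π)) * IF ≤ (1/(2*π)) * (2*π*((11/10 + (99/100)*π^2) * S)) :=
          mul_le_mul_of_nonneg_left key (by positivity)
      _ = (11/10 + (99/100)*π^2) * S := by field_simp
end

section
/- For every ε > 0 there is a constant C(ε) such that for all integers m ≥ 0, all N ≥ 1, and all integers u, v, the number of triples (j,k,ℓ) ∈ {0,…,N−1}³ with j+k+ℓ = u and j(j+m)+k(k+m)+ℓ(ℓ+m) = v is at most C(ε) N^ε. -/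
open Finset

def nroots (n : ℕ) : ℕ :=
  ((Finset.range n).filter (fun s : ℕ => (n : ℤ) ∣ (s : ℤ)^2 + 3)).card

lemma sq_add_three_mod {k : ℕ} (s : ℕ) (hk : 0 < k) :
    ((s % k : ℕ) : ℤ)^2 + 3 ≡ (s:ℤ)^2 + 3 [ZMOD (k:ℤ)] := by
  have h1 : ((s % k : ℕ) : ℤ) ≡ (s : ℤ) [ZMOD (k:ℤ)] := by
    have : ((s % k : ℕ) : ℤ) = (s : ℤ) % (k : ℤ) := by push_cast; ring
    rw [this]
    exact Int.emod_emod_of_dvd _ dvd_rfl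
  exact (h1.pow 2).add_right 3

lemma nroots_mul_le {m n : ℕ} (h : Nat.Coprime m n) :
    nroots (m * n) ≤ nroots m * nroots n := by
  rcases Nat.eq_zero_or_pos m with hm | hm
  · simp [hm, nroots]
  rcases Nat.eq_zero_or_pos n with hn | hn
  · simp [hn, nroots, Nat.mul_zero]
  unfold nroots; rw [← Finset.card_product]
  apply Finset.card_le_card_of_injOn (fun s => (s % m, s % n))
  · intro s hs
    simp only [Finset.mem_coe, Finset.mem_filter, Finset.mem_range] at hs
    obtain ⟨hsr, hdvd⟩ := hs
    have key : ∀ k : ℕ, 0 < k → (k : ℤ) ∣ ((m*n : ℕ) : ℤ) → ((k:ℤ) ∣ ((s % k : ℕ) : ℤ)^2 + 3) := by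
      intro k hk hkd
      have h2 : (k:ℤ) ∣ (s:ℤ)^2 + 3 := hkd.trans hdvd
      exact Int.modEq_zero_iff_dvd.mp ((sq_add_three_mod s hk).trans (Int.modEq_zero_iff_dvd.mpr h2))
    simp only [Finset.mem_coe, Finset.mem_product, Finset.mem_filter, Finset.mem_range, nroots]
    refine ⟨⟨Nat.mod_lt _ hm, key m hm (by exact_mod_cast Int.natCast_dvd_natCast.mpr ⟨n, rfl⟩)⟩,
      ⟨Nat.mod_lt _ hn, key n hn (by exact_mod_cast Int.natCast_dvd_natCast.mpr ⟨m, mul_comm m n⟩)⟩⟩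
  · intro s hs t ht hst
    simp only [Finset.mem_coe, Finset.mem_filter, Finset.mem_range] at hs ht
    simp only [Prod.mk.injEq] at hst
    have h1 : s ≡ t [MOD m] := by unfold Nat.ModEq; omega
    have h2 : s ≡ t [MOD n] := by unfold Nat.ModEq; omega
    have := (Nat.modEq_and_modEq_iff_modEq_mul h).mp ⟨h1, h2⟩
    unfold Nat.ModEq at this
    rwa [Nat.mod_eq_of_lt hs.1, Nat.mod_eq_of_lt ht.1] at this
open Finset

lemma cover_card_le_four {P Q : ℕ} (F : Finset ℕ) (hQ : 0 < Q) (hPQ : P ≤ 2*Q)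
    (hFP : F ⊆ Finset.range P)
    (H : ∀ s ∈ F, ∀ t ∈ F, (Q:ℤ) ∣ (s:ℤ) - t ∨ (Q:ℤ) ∣ (s:ℤ) + t) :
    F.card ≤ 4 := by
  rcases F.eq_empty_or_nonempty with hF | ⟨s₀, hs₀⟩
  · simp [hF]
  have h4 : (Finset.univ : Finset (Bool × Bool)).card = 4 := by simp
  rw [← h4]
  refine Finset.card_le_card_of_injOn
    (fun s => (decide ((Q:ℤ) ∣ (s:ℤ) - s₀), decide (Q ≤ s)))
    (fun a _ => Finset.mem_univ _) ?_
  · intro s hs t ht hst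
    simp only [Finset.mem_coe] at hs ht
    simp only [Prod.mk.injEq, decide_eq_decide] at hst
    obtain ⟨h1, h2⟩ := hst
    have hdiv : (Q:ℤ) ∣ (s:ℤ) - t := by
      by_cases hc : (Q:ℤ) ∣ (s:ℤ) - s₀
      · have hc' : (Q:ℤ) ∣ (t:ℤ) - s₀ := h1.mp hc
        have := dvd_sub hc hc'
        simpa using this
      · have hc' : ¬ (Q:ℤ) ∣ (t:ℤ) - s₀ := fun h => hc (h1.mpr h)
        have d1 : (Q:ℤ) ∣ (s:ℤ) + s₀ := (H s hs s₀ hs₀).resolve_left hc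
        have d2 : (Q:ℤ) ∣ (t:ℤ) + s₀ := (H t ht s₀ hs₀).resolve_left hc'
        have := dvd_sub d1 d2
        simpa using this
    have hsP : s < P := Finset.mem_range.mp (hFP hs)
    have htP : t < P := Finset.mem_range.mp (hFP ht)
    have habs : |(s:ℤ) - t| < (Q:ℤ) := by
      rw [abs_lt]
      by_cases hq : Q ≤ s
      · have hq' : Q ≤ t := h2.mp hq
        constructor <;> push_cast <;> omega
      · have hq' : ¬ Q ≤ t := fun h => hq (h2.mpr h)
        constructor <;> push_cast <;> omega
    have := Int.eq_zero_of_abs_lt_dvd hdiv habs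
    exact_mod_cast sub_eq_zero.mp (by linarith [this] : (s:ℤ) - t = 0)

lemma coprime_pow_dvd_of_prime {q : ℤ} (hq : Prime q) {x y : ℤ} (hqx : ¬ q ∣ x) {n : ℕ}
    (h : q^n ∣ x*y) : q^n ∣ y :=
  ((hq.coprime_iff_not_dvd.mpr hqx).pow_left).dvd_of_dvd_mul_left h

lemma odd_of_root {a : ℕ} (ha : 1 ≤ a) {s : ℤ} (h : (2:ℤ)^a ∣ s^2 + 3) : Odd s := by
  rcases Int.even_or_odd s with he | ho
  · exfalso
    have h2 : (2:ℤ) ∣ s^2 + 3 := dvd_trans (dvd_pow_self 2 (by omega : a ≠ 0)) h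
    obtain ⟨c, hc⟩ := he
    obtain ⟨d, hd⟩ := h2
    obtain ⟨e, he2⟩ : ∃ e, s^2 = 2*e := ⟨2*(c*c), by rw [hc]; ring⟩
    rw [he2] at hd
    omega
  · exact ho

lemma nroots_prime_pow_le {p a : ℕ} (hp : p.Prime) : nroots (p^a) ≤ 4 := by
  rcases Nat.eq_zero_or_pos a with rfl | ha
  · calc nroots (p^0) ≤ (Finset.range (p^0)).card := Finset.card_filter_le _ _
      _ ≤ 4 := by norm_num
  have hdiff : ∀ s t : ℕ, ((p:ℤ)^a ∣ (s:ℤ)^2 + 3) → ((p:ℤ)^a ∣ (t:ℤ)^2 + 3) →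
      (p:ℤ)^a ∣ ((s:ℤ) - t) * ((s:ℤ) + t) := by
    intro s t hs ht
    have : ((s:ℤ) - t) * ((s:ℤ) + t) = ((s:ℤ)^2 + 3) - ((t:ℤ)^2 + 3) := by ring
    rw [this]; exact dvd_sub hs ht
  have hcast : ∀ s : ℕ, (((p^a : ℕ) : ℤ) ∣ (s:ℤ)^2 + 3) ↔ ((p:ℤ)^a ∣ (s:ℤ)^2 + 3) := by
    intro s; push_cast; rfl
  by_cases h3 : p = 3
  · subst h3
    have key : ∀ s ∈ (Finset.range (3^a)).filter
        (fun s : ℕ => ((3^a : ℕ) : ℤ) ∣ (s:ℤ)^2 + 3), s = 0 ∧ a = 1 := by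
      intro s hs
      simp only [Finset.mem_filter, Finset.mem_range] at hs
      obtain ⟨hsr, hdvd⟩ := hs
      rw [hcast] at hdvd
      have h31 : (3:ℤ) ∣ (s:ℤ)^2 + 3 :=
        dvd_trans (dvd_pow_self (3:ℤ) (by omega : a ≠ 0)) hdvd
      have h3s : (3:ℤ) ∣ (s:ℤ) := by
        have : (3:ℤ) ∣ (s:ℤ)^2 := (dvd_add_right (dvd_refl 3)).mp (by rwa [add_comm] at h31)
        exact Int.Prime.dvd_pow' (by norm_num) this
      have ha1 : a = 1 := by
        by_contra hne
        have ha2 : 2 ≤ a := by omega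
        have h9 : (9:ℤ) ∣ (s:ℤ)^2 + 3 := by
          refine dvd_trans ?_ hdvd
          calc (9:ℤ) = 3^2 := by norm_num
            _ ∣ 3^a := pow_dvd_pow 3 ha2
        obtain ⟨c, hc⟩ := h3s
        obtain ⟨d, hd⟩ := h9
        have h33 : (9:ℤ) ∣ 3 := ⟨d - c*c, by nlinarith⟩
        norm_num at h33
      subst ha1
      have hs3 : s < 3 := by simpa using hsr
      obtain ⟨c, hc⟩ := h3s
      constructor
      · interval_cases s <;> omega
      · rfl
    rw [nroots]
    refine le_trans (Finset.card_le_one.mpr (fun s hs t ht => ?_)) (by norm_num)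
    have h1 := key s hs
    have h2 := key t ht
    omega
  by_cases h2 : p = 2
  · subst h2
    by_cases ha3 : a ≤ 2
    · calc nroots (2^a) ≤ (Finset.range (2^a)).card := Finset.card_filter_le _ _
        _ ≤ 4 := by
          rw [Finset.card_range]
          calc 2^a ≤ 2^2 := Nat.pow_le_pow_right (by norm_num) ha3
            _ = 4 := by norm_num
    · push_neg at ha3
      have hQ : (2:ℕ) * 2^(a-1) = 2^a := by
        rw [← pow_succ']; congr 1; omega
      rw [nroots]
      apply cover_card_le_four (Q := 2^(a-1)) _ (by positivity) (by omega)
        (Finset.filter_subset _ _)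
      intro s hs t ht
      simp only [Finset.mem_filter, Finset.mem_range] at hs ht
      have hds : (2:ℤ)^a ∣ (s:ℤ)^2 + 3 := (hcast s).mp hs.2
      have hdt : (2:ℤ)^a ∣ (t:ℤ)^2 + 3 := (hcast t).mp ht.2
      have hos := odd_of_root (by omega) hds
      have hot := odd_of_root (by omega) hdt
      obtain ⟨x, hx⟩ := hos
      obtain ⟨y, hy⟩ := hot
      obtain ⟨c, hc⟩ : ∃ c, (s:ℤ) - t = 2*c := ⟨x - y, by omega⟩
      obtain ⟨d, hd⟩ : ∃ d, (s:ℤ) + t = 2*d := ⟨x + y + 1, by omega⟩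
      have hcd : c + d = (s:ℤ) := by omega
      have hdvd4 : (2:ℤ)^a ∣ 4 * (c * d) := by
        have h := hdiff s t hds hdt
        rw [hc, hd] at h
        convert h using 1 <;> ring
      have hdvd2 : (2:ℤ)^(a-2) ∣ c * d := by
        have h4 : (2:ℤ)^a = 4 * 2^(a-2) := by
          rw [(by norm_num : (4:ℤ) = 2^2), ← pow_add]
          congr 1; omega
        rw [h4] at hdvd4
        exact (mul_dvd_mul_iff_left (by norm_num : (4:ℤ) ≠ 0)).mp hdvd4
      have hcastQ : ((2^(a-1) : ℕ) : ℤ) = 2^(a-1) := by push_cast; rfl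
      have hpow : (2:ℤ) * 2^(a-2) = 2^(a-1) := by
        rw [← pow_succ']; congr 1; omega
      rcases Int.even_or_odd c with hce | hco
      · -- c even ⇒ d odd ⇒ 2^(a-2) ∣ c ⇒ left
        have hdo : Odd d := by
          rcases Int.even_or_odd d with hde | hdo
          · exfalso
            obtain ⟨x1, hx1⟩ := hce; obtain ⟨y1, hy1⟩ := hde
            omega
          · exact hdo
        have : (2:ℤ)^(a-2) ∣ c := by
          refine coprime_pow_dvd_of_prime (x := d) Int.prime_two ?_ (by rwa [mul_comm] at hdvd2)
          obtain ⟨k, hk⟩ := hdo; omega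
        obtain ⟨e, he⟩ := this
        left
        rw [hcastQ]
        exact ⟨e, by rw [hc, he, ← mul_assoc, hpow]⟩
      · have : (2:ℤ)^(a-2) ∣ d := by
          refine coprime_pow_dvd_of_prime Int.prime_two ?_ hdvd2
          obtain ⟨k, hk⟩ := hco; omega
        obtain ⟨e, he⟩ := this
        right
        rw [hcastQ]
        exact ⟨e, by rw [hd, he, ← mul_assoc, hpow]⟩
  · -- p odd ≥ 5
    have hpI : Prime (p : ℤ) := Nat.prime_iff_prime_int.mp hp
    rw [nroots]
    apply cover_card_le_four (Q := p^a) _ (pow_pos hp.pos a) (by omega)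
      (Finset.filter_subset _ _)
    intro s hs t ht
    simp only [Finset.mem_filter, Finset.mem_range] at hs ht
    have hds : (p:ℤ)^a ∣ (s:ℤ)^2 + 3 := (hcast s).mp hs.2
    have hdt : (p:ℤ)^a ∣ (t:ℤ)^2 + 3 := (hcast t).mp ht.2
    have h := hdiff s t hds hdt
    have hcastQ : ((p^a : ℕ) : ℤ) = (p:ℤ)^a := by push_cast; rfl
    rw [hcastQ]
    by_cases hc1 : (p:ℤ) ∣ (s:ℤ) - t
    · by_cases hc2 : (p:ℤ) ∣ (s:ℤ) + t
      · exfalso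
        have hps : (p:ℤ) ∣ 2 * s := by
          have := dvd_add hc1 hc2
          have e : ((s:ℤ) - t) + ((s:ℤ) + t) = 2 * s := by ring
          rw [e] at this; exact this
        have hp2 : ¬ (p:ℤ) ∣ 2 := by
          intro hd
          have hle : (p:ℤ) ≤ 2 := Int.le_of_dvd (by norm_num) hd
          have hle' : p ≤ 2 := by exact_mod_cast hle
          have := hp.two_le
          exact h2 (by omega)
        have hs' : (p:ℤ) ∣ (s:ℤ) := (hpI.dvd_mul.mp hps).resolve_left hp2
        have hsq : (p:ℤ) ∣ (s:ℤ)^2 := dvd_pow hs' (by norm_num)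
        have hp3 : (p:ℤ) ∣ 3 := (dvd_add_right hsq).mp
          ((dvd_pow_self (p:ℤ) (by omega : a ≠ 0)).trans hds)
        have hle : (p:ℤ) ≤ 3 := Int.le_of_dvd (by norm_num) hp3
        have hle' : p ≤ 3 := by exact_mod_cast hle
        have := hp.two_le
        omega
      · left
        exact coprime_pow_dvd_of_prime hpI hc2 (by rwa [mul_comm] at h)
    · right
      exact coprime_pow_dvd_of_prime hpI hc1 h
section D
open Finset

lemma nroots_le_pow_omega : ∀ M : ℕ, 1 ≤ M → nroots M ≤ 4 ^ M.primeFactors.card := by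
  intro M
  induction M using Nat.strong_induction_on with
  | _ M ih =>
    intro hM
    rcases eq_or_lt_of_le hM with h1 | h1
    · rw [← h1]
      calc nroots 1 ≤ (Finset.range 1).card := Finset.card_filter_le _ _
        _ ≤ 4 ^ (Nat.primeFactors 1).card := by simp
    have hM0 : M ≠ 0 := by omega
    have hM1 : M ≠ 1 := by omega
    set p := M.minFac with hp
    have hpp : p.Prime := Nat.minFac_prime hM1
    set a := M.factorization p with ha
    have hpd : p ∣ M := Nat.minFac_dvd M
    have ha1 : 1 ≤ a := (Nat.Prime.factorization_pos_of_dvd hpp hM0 hpd)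
    set M' := M / p ^ a with hM'
    have hsplit : p ^ a * M' = M := Nat.ordProj_mul_ordCompl_eq_self M p
    have hcop : Nat.Coprime (p ^ a) M' := Nat.Coprime.pow_left a (Nat.coprime_ordCompl hpp hM0)
    have hM'pos : 0 < M' := Nat.ordCompl_pos p hM0
    have hM'lt : M' < M := by
      have hpa : 1 < p ^ a := by
        calc 1 < p := hpp.one_lt
          _ ≤ p ^ a := Nat.le_self_pow (by omega) p
      calc M' < p ^ a * M' := by
            nlinarith [hM'pos]
        _ = M := hsplit
    have hMdvd : M' ∣ M := Nat.ordCompl_dvd M p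
    have hpmem : p ∈ M.primeFactors := Nat.mem_primeFactors.mpr ⟨hpp, hpd, hM0⟩
    have homega : M'.primeFactors.card ≤ M.primeFactors.card - 1 := by
      have hsub : M'.primeFactors ⊆ M.primeFactors.erase p := by
        intro q hq
        have hq1 : q ∈ M.primeFactors := Nat.primeFactors_mono hMdvd hM0 hq
        have hq2 : q ≠ p := by
          intro hqe
          have hcop2 := Nat.coprime_ordCompl hpp hM0
          have hqd : q ∣ M' := Nat.dvd_of_mem_primeFactors hq
          rw [hqe] at hqd
          have h1 : p ∣ Nat.gcd p M' := Nat.dvd_gcd dvd_rfl hqd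
          rw [Nat.Coprime] at hcop2
          rw [hcop2] at h1
          exact hpp.one_lt.ne' (Nat.dvd_one.mp h1)
        exact Finset.mem_erase.mpr ⟨hq2, hq1⟩
      calc M'.primeFactors.card ≤ (M.primeFactors.erase p).card := Finset.card_le_card hsub
        _ = M.primeFactors.card - 1 := Finset.card_erase_of_mem hpmem
    have homega1 : 1 ≤ M.primeFactors.card := Finset.card_pos.mpr ⟨p, hpmem⟩
    calc nroots M = nroots (p ^ a * M') := by rw [hsplit]
      _ ≤ nroots (p ^ a) * nroots M' := nroots_mul_le hcop
      _ ≤ 4 * 4 ^ M'.primeFactors.card :=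
          Nat.mul_le_mul (nroots_prime_pow_le hpp) (ih M' hM'lt hM'pos)
      _ ≤ 4 * 4 ^ (M.primeFactors.card - 1) := by
          have := Nat.pow_le_pow_right (by norm_num : 1 ≤ 4) homega
          omega
      _ = 4 ^ M.primeFactors.card := by
          rw [← pow_succ']
          congr 1
          omega

end D
section E
open Finset

lemma rpow_pow_comm {p : ℝ} (hp : 0 ≤ p) (ε : ℝ) (a : ℕ) : (p^ε)^a = (p^a)^ε := by
  rw [← Real.rpow_natCast (p^ε) a, ← Real.rpow_mul hp, mul_comm, Real.rpow_mul hp,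
    Real.rpow_natCast]

lemma exists_T (ε : ℝ) (hε : 0 < ε) : ∃ T : ℕ, 1 ≤ T ∧ (4:ℝ) ≤ (T:ℝ)^ε := by
  refine ⟨⌈(4:ℝ)^(1/ε)⌉₊ + 1, by omega, ?_⟩
  have h1 : (4:ℝ)^(1/ε) ≤ ((⌈(4:ℝ)^(1/ε)⌉₊ + 1 : ℕ) : ℝ) := by
    push_cast
    linarith [Nat.le_ceil ((4:ℝ)^(1/ε))]
  have h2 : ((4:ℝ)^(1/ε))^ε ≤ ((⌈(4:ℝ)^(1/ε)⌉₊ + 1 : ℕ) : ℝ)^ε :=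
    Real.rpow_le_rpow (Real.rpow_nonneg (by norm_num) _) h1 hε.le
  calc (4:ℝ) = ((4:ℝ)^(1/ε))^ε := by
        rw [← Real.rpow_mul (by norm_num : (0:ℝ) ≤ 4), one_div_mul_cancel hε.ne',
          Real.rpow_one]
    _ ≤ _ := h2

lemma exists_bound_pow_omega (ε : ℝ) (hε : 0 < ε) :
    ∃ C : ℝ, 0 < C ∧ ∀ M : ℕ, 1 ≤ M → (4:ℝ) ^ M.primeFactors.card ≤ C * (M:ℝ) ^ ε := by
  obtain ⟨T, hT1, hT4⟩ := exists_T ε hε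
  refine ⟨(4:ℝ)^T, by positivity, fun M hM => ?_⟩
  have hM0 : M ≠ 0 := by omega
  set S := M.primeFactors with hS
  set S₁ := S.filter (fun p => p < T) with hS₁
  set S₂ := S.filter (fun p => ¬ p < T) with hS₂
  have hcard : S₁.card + S₂.card = S.card := Finset.card_filter_add_card_filter_not _
  have h1 : (4:ℝ)^S₁.card ≤ (4:ℝ)^T := by
    apply pow_le_pow_right₀ (by norm_num)
    calc S₁.card ≤ (Finset.range T).card := Finset.card_le_card (by
        intro p hp
        simp only [hS₁, Finset.mem_filter] at hp
        exact Finset.mem_range.mpr hp.2)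
      _ = T := Finset.card_range T
  have h2 : (4:ℝ)^S₂.card ≤ ((M:ℝ))^ε := by
    have e1 : (4:ℝ)^S₂.card = ∏ _p ∈ S₂, (4:ℝ) := by rw [Finset.prod_const]
    have e2 : ∏ p ∈ S₂, (4:ℝ) ≤ ∏ p ∈ S₂, ((p:ℝ))^ε := by
      apply Finset.prod_le_prod (fun _ _ => by norm_num)
      intro p hp
      simp only [hS₂, Finset.mem_filter, not_lt] at hp
      calc (4:ℝ) ≤ (T:ℝ)^ε := hT4
        _ ≤ ((p:ℝ))^ε := Real.rpow_le_rpow (by positivity) (by exact_mod_cast hp.2) hε.le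
    have e3 : ∏ p ∈ S₂, ((p:ℝ))^ε = ((∏ p ∈ S₂, p : ℕ):ℝ)^ε := by
      rw [Real.finset_prod_rpow S₂ (fun p => (p:ℝ)) (fun p _ => by positivity) ε]
      rw [← Nat.cast_prod]
    have e4 : (∏ p ∈ S₂, p) ∣ M := by
      refine dvd_trans ?_ (Nat.prod_primeFactors_dvd M)
      exact Finset.prod_dvd_prod_of_subset _ _ _ (Finset.filter_subset _ _)
    have e5 : ((∏ p ∈ S₂, p : ℕ):ℝ)^ε ≤ ((M:ℝ))^ε :=
      Real.rpow_le_rpow (by positivity) (by exact_mod_cast Nat.le_of_dvd (by omega) e4) hε.le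
    calc (4:ℝ)^S₂.card = ∏ _p ∈ S₂, (4:ℝ) := e1
      _ ≤ ∏ p ∈ S₂, ((p:ℝ))^ε := e2
      _ = ((∏ p ∈ S₂, p : ℕ):ℝ)^ε := e3
      _ ≤ _ := e5
  calc (4:ℝ)^S.card = (4:ℝ)^S₁.card * (4:ℝ)^S₂.card := by rw [← pow_add, hcard]
    _ ≤ (4:ℝ)^T * ((M:ℝ))^ε := by
        apply mul_le_mul h1 h2 (by positivity) (by positivity)

lemma exists_bound_divisors (ε : ℝ) (hε : 0 < ε) :
    ∃ C : ℝ, 0 < C ∧ ∀ M : ℕ, 1 ≤ M → ((M.divisors.card : ℕ):ℝ) ≤ C * (M:ℝ) ^ ε := by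
  obtain ⟨T, hT1, hT4⟩ := exists_T ε hε
  set x : ℝ := (2:ℝ)^ε - 1 with hx
  have hxpos : 0 < x := by
    have : (1:ℝ) < (2:ℝ)^ε := Real.one_lt_rpow_iff_of_pos (by norm_num) |>.mpr
      (Or.inl ⟨by norm_num, hε⟩)
    simp [hx]
    linarith
  set C₀ : ℝ := max 1 (1/x) with hC₀
  have hC₀1 : 1 ≤ C₀ := le_max_left _ _
  have hC₀x : 1 ≤ C₀ * x := by
    calc (1:ℝ) = (1/x) * x := by field_simp
      _ ≤ C₀ * x := mul_le_mul_of_nonneg_right (le_max_right _ _) hxpos.le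
  refine ⟨C₀^T, by positivity, fun M hM => ?_⟩
  have hM0 : M ≠ 0 := by omega
  set S := M.primeFactors with hS
  -- key per-prime bounds
  have key : ∀ p ∈ S, ((M.factorization p + 1 : ℕ):ℝ) ≤
      (if p < T then C₀ else 1) * (((p^(M.factorization p) : ℕ)):ℝ)^ε := by
    intro p hpS
    have hpp : p.Prime := Nat.prime_of_mem_primeFactors hpS
    set a := M.factorization p with ha
    have hp2 : (2:ℝ) ≤ (p:ℝ) := by exact_mod_cast hpp.two_le
    have hcast : (((p^a : ℕ)):ℝ) = ((p:ℝ))^a := by push_cast; rfl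
    by_cases hpT : p < T
    · rw [if_pos hpT, hcast]
      have hb1 : ((a:ℝ) + 1) ≤ C₀ * (1 + a * x) := by
        have : C₀ * (1 + a * x) = C₀ + a * (C₀ * x) := by ring
        rw [this]
        have h1 : (a:ℝ) * 1 ≤ a * (C₀ * x) :=
          mul_le_mul_of_nonneg_left hC₀x (by positivity)
        linarith
      have hb2 : (1 + (a:ℝ) * x) ≤ (1 + x)^a := one_add_mul_le_pow (by linarith) a
      have hb3 : ((1:ℝ) + x)^a = ((2:ℝ)^ε)^a := by rw [hx]; ring_nf
      have hb4 : ((2:ℝ)^ε)^a ≤ ((p:ℝ)^ε)^a := by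
        apply pow_le_pow_left₀ (by positivity)
        exact Real.rpow_le_rpow (by norm_num) hp2 hε.le
      have hb5 : ((p:ℝ)^ε)^a = ((p:ℝ)^a)^ε := rpow_pow_comm (by positivity) ε a
      have hfin : ((a:ℝ) + 1) ≤ C₀ * ((p:ℝ)^a)^ε := by
        calc ((a:ℝ) + 1) ≤ C₀ * (1 + a * x) := hb1
          _ ≤ C₀ * ((1 + x)^a) := by
              apply mul_le_mul_of_nonneg_left hb2 (by positivity)
          _ = C₀ * ((2:ℝ)^ε)^a := by rw [hb3]
          _ ≤ C₀ * ((p:ℝ)^ε)^a := by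
              apply mul_le_mul_of_nonneg_left hb4 (by positivity)
          _ = C₀ * ((p:ℝ)^a)^ε := by rw [hb5]
      calc ((a + 1 : ℕ):ℝ) = (a:ℝ) + 1 := by push_cast; rfl
        _ ≤ _ := hfin
    · rw [if_neg hpT, hcast, one_mul]
      have hTp : (T:ℝ) ≤ (p:ℝ) := by exact_mod_cast Nat.le_of_not_lt hpT
      have h2p : (2:ℝ) ≤ (p:ℝ)^ε := by
        calc (2:ℝ) ≤ 4 := by norm_num
          _ ≤ (T:ℝ)^ε := hT4
          _ ≤ (p:ℝ)^ε := Real.rpow_le_rpow (by positivity) hTp hε.le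
      have hb1 : ((a:ℝ) + 1) ≤ (2:ℝ)^a := by
        have := Nat.lt_two_pow_self (n := a)
        have h2 : ((a:ℝ)) < ((2:ℕ):ℝ)^a := by exact_mod_cast this
        push_cast at h2 ⊢
        have h3 : ((a:ℝ) + 1) ≤ (2:ℝ)^a := by
          have : (a:ℕ) + 1 ≤ 2^a := by omega
          exact_mod_cast this
        exact h3
      calc ((a + 1 : ℕ):ℝ) = (a:ℝ) + 1 := by push_cast; rfl
        _ ≤ (2:ℝ)^a := hb1
        _ ≤ ((p:ℝ)^ε)^a := pow_le_pow_left₀ (by norm_num) h2p a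
        _ = ((p:ℝ)^a)^ε := rpow_pow_comm (by positivity) ε a
  -- assemble
  have hdiv : (M.divisors.card : ℕ) = ∏ p ∈ S, (M.factorization p + 1) := by
    rw [Nat.card_divisors hM0]
  have hMprod : (∏ p ∈ S, p^(M.factorization p) : ℕ) = M := by
    have h := Nat.factorization_prod_pow_eq_self hM0
    have h2 : M.factorization.prod (fun p k => p ^ k) =
        ∏ p ∈ M.factorization.support, p ^ M.factorization p := rfl
    rw [h2, Nat.support_factorization] at h
    exact h
  calc ((M.divisors.card : ℕ):ℝ)
      = ∏ p ∈ S, ((M.factorization p + 1 : ℕ):ℝ) := by rw [hdiv]; push_cast; rfl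
    _ ≤ ∏ p ∈ S, ((if p < T then C₀ else 1) * (((p^(M.factorization p) : ℕ)):ℝ)^ε) := by
        apply Finset.prod_le_prod (fun p _ => by positivity) key
    _ = (∏ p ∈ S, (if p < T then C₀ else 1)) *
        ∏ p ∈ S, (((p^(M.factorization p) : ℕ)):ℝ)^ε := Finset.prod_mul_distrib
    _ ≤ C₀^T * (M:ℝ)^ε := by
        apply mul_le_mul
        · -- product of C₀/1 bounded by C₀^T
          calc (∏ p ∈ S, (if p < T then C₀ else 1))
              ≤ ∏ p ∈ S.filter (fun p => p < T), C₀ := by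
                rw [← Finset.prod_filter_mul_prod_filter_not S (fun p => p < T)]
                have h2 : ∏ p ∈ S.filter (fun p => ¬ p < T), (if p < T then C₀ else 1) = 1 := by
                  apply Finset.prod_eq_one
                  intro p hp
                  simp only [Finset.mem_filter] at hp
                  rw [if_neg hp.2]
                rw [h2, mul_one]
                apply le_of_eq
                apply Finset.prod_congr rfl
                intro p hp
                simp only [Finset.mem_filter] at hp
                rw [if_pos hp.2]
            _ = C₀ ^ (S.filter (fun p => p < T)).card := Finset.prod_const C₀
            _ ≤ C₀^T := by
                apply pow_le_pow_right₀ hC₀1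
                calc (S.filter (fun p => p < T)).card ≤ (Finset.range T).card :=
                      Finset.card_le_card (by
                        intro p hp
                        simp only [Finset.mem_filter] at hp
                        exact Finset.mem_range.mpr hp.2)
                  _ = T := Finset.card_range T
        · calc ∏ p ∈ S, (((p^(M.factorization p) : ℕ)):ℝ)^ε
              = ((∏ p ∈ S, p^(M.factorization p) : ℕ):ℝ)^ε := by
                rw [Real.finset_prod_rpow S (fun p => ((p^(M.factorization p) : ℕ):ℝ))
                  (fun p _ => by positivity) ε]
                rw [← Nat.cast_prod]
            _ ≤ (M:ℝ)^ε := by rw [hMprod]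
        · positivity
        · positivity

end E
section F
open Finset

noncomputable def repSet (M : ℕ) : Finset (ℤ × ℤ) :=
  ((Finset.Icc (-(M:ℤ)) M) ×ˢ (Finset.Icc (-(M:ℤ)) M)).filter
    (fun q => q.1^2 + 3*q.2^2 = (M:ℤ))

noncomputable def primSet (M : ℕ) : Finset (ℤ × ℤ) :=
  (repSet M).filter (fun q => Int.gcd q.1 q.2 = 1)

lemma primSet_card_le {M : ℕ} (hM : 1 ≤ M) : (primSet M).card ≤ 2 * nroots M := by
  haveI : NeZero M := ⟨by omega⟩
  have htarget : ((((Finset.range M).filter (fun s : ℕ => (M : ℤ) ∣ (s : ℤ)^2 + 3)) ×ˢ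
      (Finset.univ : Finset Bool)).card) = nroots M * 2 := by
    rw [Finset.card_product, Finset.card_univ]
    simp [nroots]
  rw [(by ring : 2 * nroots M = nroots M * 2), ← htarget]
  apply Finset.card_le_card_of_injOn
    (fun q => ((((q.1 : ZMod M) * (q.2 : ZMod M)⁻¹).val),
      decide (0 < q.2 ∨ (q.2 = 0 ∧ 0 < q.1))))
  · -- membership
    rintro ⟨x, y⟩ hq
    simp only [Finset.mem_coe, primSet, repSet, Finset.mem_filter, Finset.mem_product, Finset.mem_Icc] at hq
    obtain ⟨⟨_, heq⟩, hgcd⟩ := hq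
    have hcop : IsCoprime x y := Int.isCoprime_iff_gcd_eq_one.mpr hgcd
    have hcopM : IsCoprime y (M:ℤ) := by
      have h1 : IsCoprime y (x^2) := (hcop.symm).pow_right
      have h2 : IsCoprime y (x^2 + y * (3*y)) := h1.add_mul_left_right (3*y)
      have h3 : x^2 + y*(3*y) = (M:ℤ) := by rw [← heq]; ring
      rwa [h3] at h2
    -- Y is a unit in ZMod M
    obtain ⟨a, b, hab⟩ := hcopM
    have hY : (a : ZMod M) * (y : ZMod M) = 1 := by
      have := congrArg (fun t : ℤ => (t : ZMod M)) hab
      push_cast at this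
      rwa [ZMod.natCast_self, mul_zero, add_zero] at this
    have hYu : IsUnit ((y : ℤ) : ZMod M) := IsUnit.of_mul_eq_one _ (by
      rw [mul_comm] at hY; exact hY)
    set X : ZMod M := ((x : ℤ) : ZMod M) with hX
    set Y : ZMod M := ((y : ℤ) : ZMod M) with hYdef
    set e : ZMod M := X * Y⁻¹ with he
    have hYY : Y * Y⁻¹ = 1 := ZMod.mul_inv_of_unit Y hYu
    have hXY : X^2 + 3*Y^2 = 0 := by
      have := congrArg (fun t : ℤ => (t : ZMod M)) heq
      push_cast at this
      rw [ZMod.natCast_self] at this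
      exact this
    have hroot : e^2 + 3 = 0 := by
      have h1 : e^2 + 3 = (Y⁻¹)^2 * (X^2 + 3*Y^2) + 3*(1 - (Y*Y⁻¹)^2) := by
        rw [he]; ring
      rw [h1, hXY, hYY]
      ring
    simp only [Finset.mem_coe, Finset.mem_product, Finset.mem_filter, Finset.mem_range, Finset.mem_univ,
      and_true]
    constructor
    · exact ZMod.val_lt e
    · -- (M:ℤ) ∣ (e.val)^2 + 3
      rw [← ZMod.intCast_zmod_eq_zero_iff_dvd]
      push_cast
      calc ((e.val : ZMod M))^2 + 3 = e^2 + 3 := by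
            rw [ZMod.natCast_val, ZMod.cast_id]
        _ = 0 := hroot
  · -- injectivity
    rintro ⟨x, y⟩ hq ⟨x', y'⟩ hq' heq2
    simp only [Finset.mem_coe, primSet, repSet, Finset.mem_filter, Finset.mem_product,
      Finset.mem_Icc] at hq hq'
    obtain ⟨⟨_, e1⟩, hg1⟩ := hq
    obtain ⟨⟨_, e2⟩, hg2⟩ := hq'
    simp only [Prod.mk.injEq, decide_eq_decide] at heq2
    obtain ⟨hs, hb⟩ := heq2
    -- common root s
    set s : ℕ := (((x : ZMod M) * (y : ZMod M)⁻¹).val) with hsdef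
    -- M ∣ x - s*y  and M ∣ x' - s*y'
    have hdvd : ∀ x₁ y₁ : ℤ, x₁^2 + 3*y₁^2 = (M:ℤ) → Int.gcd x₁ y₁ = 1 →
        (((x₁ : ZMod M) * (y₁ : ZMod M)⁻¹).val = s) → (M:ℤ) ∣ x₁ - (s:ℤ)*y₁ := by
      intro x₁ y₁ heq hgcd hval
      have hcop : IsCoprime x₁ y₁ := Int.isCoprime_iff_gcd_eq_one.mpr hgcd
      have hcopM : IsCoprime y₁ (M:ℤ) := by
        have h1 : IsCoprime y₁ (x₁^2) := (hcop.symm).pow_right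
        have h2 : IsCoprime y₁ (x₁^2 + y₁ * (3*y₁)) := h1.add_mul_left_right (3*y₁)
        have h3 : x₁^2 + y₁*(3*y₁) = (M:ℤ) := by rw [← heq]; ring
        rwa [h3] at h2
      obtain ⟨a, b, hab⟩ := hcopM
      have hY : (a : ZMod M) * (y₁ : ZMod M) = 1 := by
        have := congrArg (fun t : ℤ => (t : ZMod M)) hab
        push_cast at this
        rwa [ZMod.natCast_self, mul_zero, add_zero] at this
      have hYu : IsUnit ((y₁ : ℤ) : ZMod M) := IsUnit.of_mul_eq_one _ (by
        rw [mul_comm] at hY; exact hY)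
      have hYY : ((y₁:ℤ) : ZMod M) * ((y₁:ℤ) : ZMod M)⁻¹ = 1 := ZMod.mul_inv_of_unit _ hYu
      rw [← ZMod.intCast_zmod_eq_zero_iff_dvd]
      push_cast
      have hsv : ((s:ℕ) : ZMod M) = ((x₁ : ZMod M) * (y₁ : ZMod M)⁻¹) := by
        rw [← hval, ZMod.natCast_val, ZMod.cast_id]
      calc ((x₁:ℤ) : ZMod M) - ((s:ℕ) : ZMod M) * ((y₁:ℤ) : ZMod M)
          = ((x₁:ℤ) : ZMod M) - ((x₁ : ZMod M) * (y₁ : ZMod M)⁻¹) * ((y₁:ℤ) : ZMod M) := by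
            rw [hsv]
        _ = ((x₁:ℤ) : ZMod M) * (1 - ((y₁:ℤ) : ZMod M) * ((y₁:ℤ) : ZMod M)⁻¹) := by
            push_cast
            ring
        _ = 0 := by rw [hYY]; ring
    have hd1 : (M:ℤ) ∣ x - (s:ℤ)*y := hdvd x y e1 hg1 rfl
    have hd2 : (M:ℤ) ∣ x' - (s:ℤ)*y' := hdvd x' y' e2 hg2 hs.symm
    -- determinant
    set D : ℤ := x*y' - x'*y with hD
    have hdD : (M:ℤ) ∣ D := by
      have : D = y'*(x - (s:ℤ)*y) - y*(x' - (s:ℤ)*y') := by rw [hD]; ring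
      rw [this]
      exact dvd_sub (Dvd.dvd.mul_left hd1 y') (Dvd.dvd.mul_left hd2 y)
    have hident : (M:ℤ)^2 = (x*x' + 3*y*y')^2 + 3*D^2 := by
      calc (M:ℤ)^2 = (x^2+3*y^2) * (x'^2+3*y'^2) := by rw [e1, e2]; ring
        _ = (x*x' + 3*y*y')^2 + 3*D^2 := by rw [hD]; ring
    have hM1 : (1:ℤ) ≤ (M:ℤ) := by exact_mod_cast hM
    have hDabs : |D| < (M:ℤ) := by
      by_contra hc
      push_neg at hc
      have h1 : (M:ℤ)^2 ≤ D^2 := by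
        have := abs_nonneg D
        nlinarith [sq_abs D]
      nlinarith [sq_nonneg (x*x' + 3*y*y')]
    have hD0 : D = 0 := Int.eq_zero_of_abs_lt_dvd hdD hDabs
    have hxy : x*y' = x'*y := by rw [hD] at hD0; linarith
    -- y^2 = y'^2
    have hysq : y^2 = y'^2 := by
      have key : y^2 * (M:ℤ) = y'^2 * (M:ℤ) := by
        calc y^2 * (M:ℤ) = y^2*(x'^2+3*y'^2) := by rw [e2]
          _ = (x'*y)^2 + 3*(y*y')^2 := by ring
          _ = (x*y')^2 + 3*(y*y')^2 := by rw [hxy]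
          _ = y'^2*(x^2+3*y^2) := by ring
          _ = y'^2 * (M:ℤ) := by rw [e1]
      exact mul_right_cancel₀ (by exact_mod_cast (by omega : (M:ℤ) ≠ 0)) key
    have hycases : y' = y ∨ y' = -y := by
      have : (y' - y)*(y' + y) = 0 := by linear_combination -hysq
      rcases mul_eq_zero.mp this with h | h
      · left; linarith
      · right; linarith
    clear hdvd hd1 hd2 hdD hident hD0
    clear_value s D
    clear hsdef hD hs hDabs D s
    rcases hycases with hyy | hyy
    · -- y' = y
      subst hyy
      by_cases hy0 : y' = 0
      · subst hy0
        have hx2 : x^2 = (M:ℤ) := by linarith [e1]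
        have hx2' : x'^2 = (M:ℤ) := by linarith [e2]
        have hxx : (x - x')*(x + x') = 0 := by linear_combination hx2 - hx2'
        have hx0 : x ≠ 0 := by intro h; rw [h] at hx2; simp at hx2; omega
        have hx0' : x' ≠ 0 := by intro h; rw [h] at hx2'; simp at hx2'; omega
        norm_num at hb
        rcases mul_eq_zero.mp hxx with h | h
        · have : x = x' := by linarith
          rw [this]
        · have hxneg : x' = -x := by linarith
          exfalso
          rcases lt_trichotomy x 0 with h1 | h1 | h1
          · have : 0 < x' := by omega
            rw [← hb] at this
            omega
          · exact hx0 h1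
          · have : 0 < x' := hb.mp h1
            omega
      · have : x = x' := by
          have := hxy
          exact mul_right_cancel₀ hy0 this
        rw [this]
    · -- y' = -y; contradiction unless y = 0
      by_cases hy0 : y = 0
      · subst hy0
        simp only [neg_zero] at hyy
        subst hyy
        have hx2 : x^2 = (M:ℤ) := by linarith [e1]
        have hx2' : x'^2 = (M:ℤ) := by linarith [e2]
        have hxx : (x - x')*(x + x') = 0 := by linear_combination hx2 - hx2'
        have hx0 : x ≠ 0 := by intro h; rw [h] at hx2; simp at hx2; omega
        have hx0' : x' ≠ 0 := by intro h; rw [h] at hx2'; simp at hx2'; omega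
        norm_num at hb
        rcases mul_eq_zero.mp hxx with h | h
        · have : x = x' := by linarith
          rw [this]
        · exfalso
          rcases lt_trichotomy x 0 with h1 | h1 | h1
          · have : 0 < x' := by omega
            rw [← hb] at this
            omega
          · exact hx0 h1
          · have : 0 < x' := hb.mp h1
            omega
      · exfalso
        subst hyy
        rcases lt_trichotomy y 0 with h1 | h1 | h1
        · have hb1 : (0 < y ∨ (y = 0 ∧ 0 < x)) ↔ (0 < -y ∨ (-y = 0 ∧ 0 < x')) := hb
          have : 0 < -y := by omega
          have h2 : 0 < y ∨ (y = 0 ∧ 0 < x) := hb1.mpr (Or.inl this)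
          omega
        · exact hy0 h1
        · have hb1 : (0 < y ∨ (y = 0 ∧ 0 < x)) ↔ (0 < -y ∨ (-y = 0 ∧ 0 < x')) := hb
          have h2 : 0 < -y ∨ (-y = 0 ∧ 0 < x') := hb1.mp (Or.inl h1)
          omega

end F
section G
open Finset

lemma sq_le_Icc_bound {t : ℤ} {n : ℕ} (hn : 1 ≤ n) (h : t^2 ≤ (n:ℤ)) :
    -(n:ℤ) ≤ t ∧ t ≤ n := by
  have h1 : (1:ℤ) ≤ (n:ℤ) := by exact_mod_cast hn
  constructor <;> nlinarith

lemma gcd_sq_dvd {x y : ℤ} {M : ℕ} (heq : x^2 + 3*y^2 = (M:ℤ)) :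
    (Int.gcd x y)^2 ∣ M := by
  have hdx : ((Int.gcd x y : ℕ) : ℤ) ∣ x := Int.gcd_dvd_left _ _
  have hdy : ((Int.gcd x y : ℕ) : ℤ) ∣ y := Int.gcd_dvd_right _ _
  have h1 : ((Int.gcd x y : ℕ) : ℤ)^2 ∣ x^2 := pow_dvd_pow_of_dvd hdx 2
  have h2 : ((Int.gcd x y : ℕ) : ℤ)^2 ∣ 3*y^2 := Dvd.dvd.mul_left (pow_dvd_pow_of_dvd hdy 2) 3
  have h3 : ((Int.gcd x y : ℕ) : ℤ)^2 ∣ (M:ℤ) := heq ▸ dvd_add h1 h2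
  exact_mod_cast h3

lemma repSet_card_le {M : ℕ} (hM : 1 ≤ M) :
    (repSet M).card ≤ M.divisors.card * (2 * 4 ^ M.primeFactors.card) := by
  have hM0 : M ≠ 0 := by omega
  have hmem : ∀ q ∈ repSet M, Int.gcd q.1 q.2 ∈ M.divisors := by
    rintro ⟨x, y⟩ hq
    simp only [repSet, Finset.mem_filter, Finset.mem_product, Finset.mem_Icc] at hq
    obtain ⟨_, heq⟩ := hq
    have hg2 : (Int.gcd x y)^2 ∣ M := gcd_sq_dvd heq
    exact Nat.mem_divisors.mpr ⟨dvd_trans (dvd_pow_self _ (by norm_num)) hg2, hM0⟩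
  rw [Finset.card_eq_sum_card_fiberwise hmem]
  have hfiber : ∀ g ∈ M.divisors,
      ((repSet M).filter (fun q => Int.gcd q.1 q.2 = g)).card ≤
        2 * 4 ^ M.primeFactors.card := by
    intro g hg
    have hgM : g ∣ M := (Nat.mem_divisors.mp hg).1
    have hg1 : 1 ≤ g := Nat.pos_of_dvd_of_pos hgM (by omega)
    by_cases hg2 : g^2 ∣ M
    · set M' := M / g^2 with hM'def
      have hMM : M' * g^2 = M := Nat.div_mul_cancel hg2
      have hM'1 : 1 ≤ M' := by
        rcases Nat.eq_zero_or_pos M' with h | h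
        · rw [h] at hMM; simp at hMM; omega
        · exact h
      have hMM' : (M:ℤ) = (g:ℤ)^2 * (M':ℤ) := by
        rw [← hMM]; push_cast; ring
      have hM'dvd : M' ∣ M := ⟨g^2, hMM.symm⟩
      calc ((repSet M).filter (fun q => Int.gcd q.1 q.2 = g)).card
          ≤ (primSet M').card := by
            apply Finset.card_le_card_of_injOn (fun q => (q.1 / (g:ℤ), q.2 / (g:ℤ)))
            · rintro ⟨x, y⟩ hq
              simp only [Finset.mem_coe, Finset.mem_filter, repSet, Finset.mem_product, Finset.mem_Icc] at hq
              obtain ⟨⟨_, heq⟩, hgq⟩ := hq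
              have hdx : ((g:ℕ) : ℤ) ∣ x := by rw [← hgq]; exact Int.gcd_dvd_left _ _
              have hdy : ((g:ℕ) : ℤ) ∣ y := by rw [← hgq]; exact Int.gcd_dvd_right _ _
              have hxr : x / (g:ℤ) * (g:ℤ) = x := Int.ediv_mul_cancel hdx
              have hyr : y / (g:ℤ) * (g:ℤ) = y := Int.ediv_mul_cancel hdy
              have hgne : ((g:ℤ)) ≠ 0 := by exact_mod_cast (by omega : g ≠ 0)
              have heq' : (x / (g:ℤ))^2 + 3*(y / (g:ℤ))^2 = (M':ℤ) := by
                have hexp : (g:ℤ)^2 * ((x / (g:ℤ))^2 + 3*(y / (g:ℤ))^2) =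
                    (g:ℤ)^2 * (M':ℤ) := by
                  calc (g:ℤ)^2 * ((x / (g:ℤ))^2 + 3*(y / (g:ℤ))^2)
                      = (x / (g:ℤ) * (g:ℤ))^2 + 3*(y / (g:ℤ) * (g:ℤ))^2 := by ring
                    _ = x^2 + 3*y^2 := by rw [hxr, hyr]
                    _ = (M:ℤ) := heq
                    _ = (g:ℤ)^2 * (M':ℤ) := hMM'
                exact mul_left_cancel₀ (pow_ne_zero 2 hgne) hexp
              have hb1 : (x / (g:ℤ))^2 ≤ (M':ℤ) := by nlinarith [sq_nonneg (y / (g:ℤ))]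
              have hb2 : (y / (g:ℤ))^2 ≤ (M':ℤ) := by nlinarith [sq_nonneg (x / (g:ℤ))]
              obtain ⟨hb1a, hb1b⟩ := sq_le_Icc_bound hM'1 hb1
              obtain ⟨hb2a, hb2b⟩ := sq_le_Icc_bound hM'1 hb2
              have hgcd' : Int.gcd (x / (g:ℤ)) (y / (g:ℤ)) = 1 := by
                have := Int.gcd_div_gcd_div_gcd (by rw [hgq]; omega : 0 < Int.gcd x y)
                rw [hgq] at this
                exact this
              simp only [Finset.mem_coe, primSet, repSet, Finset.mem_filter, Finset.mem_product,
                Finset.mem_Icc]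
              exact ⟨⟨⟨⟨hb1a, hb1b⟩, ⟨hb2a, hb2b⟩⟩, heq'⟩, hgcd'⟩
            · rintro ⟨x, y⟩ hq ⟨x', y'⟩ hq' he
              simp only [Finset.mem_coe, Finset.mem_filter, repSet, Finset.mem_product,
                Finset.mem_Icc] at hq hq'
              obtain ⟨_, hgq⟩ := hq
              obtain ⟨_, hgq'⟩ := hq'
              simp only [Prod.mk.injEq] at he
              obtain ⟨he1, he2⟩ := he
              have hdx : ((g:ℕ) : ℤ) ∣ x := by rw [← hgq]; exact Int.gcd_dvd_left _ _
              have hdy : ((g:ℕ) : ℤ) ∣ y := by rw [← hgq]; exact Int.gcd_dvd_right _ _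
              have hdx' : ((g:ℕ) : ℤ) ∣ x' := by rw [← hgq']; exact Int.gcd_dvd_left _ _
              have hdy' : ((g:ℕ) : ℤ) ∣ y' := by rw [← hgq']; exact Int.gcd_dvd_right _ _
              have hx : x = x' := by
                rw [← Int.ediv_mul_cancel hdx, ← Int.ediv_mul_cancel hdx', he1]
              have hy : y = y' := by
                rw [← Int.ediv_mul_cancel hdy, ← Int.ediv_mul_cancel hdy', he2]
              rw [Prod.mk.injEq]
              exact ⟨hx, hy⟩
        _ ≤ 2 * nroots M' := primSet_card_le hM'1
        _ ≤ 2 * 4 ^ M'.primeFactors.card := by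
            have := nroots_le_pow_omega M' hM'1
            omega
        _ ≤ 2 * 4 ^ M.primeFactors.card := by
            have hsub : M'.primeFactors ⊆ M.primeFactors := Nat.primeFactors_mono hM'dvd hM0
            have := Finset.card_le_card hsub
            have := Nat.pow_le_pow_right (by norm_num : 1 ≤ 4) this
            omega
    · have hempty : (repSet M).filter (fun q => Int.gcd q.1 q.2 = g) = ∅ := by
        rw [Finset.filter_eq_empty_iff]
        rintro ⟨x, y⟩ hq hgq
        apply hg2
        simp only [repSet, Finset.mem_filter, Finset.mem_product, Finset.mem_Icc] at hq
        obtain ⟨_, heq⟩ := hq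
        rw [← hgq]
        exact gcd_sq_dvd heq
      rw [hempty]
      simp
  calc ∑ g ∈ M.divisors, ((repSet M).filter (fun q => Int.gcd q.1 q.2 = g)).card
      ≤ ∑ _g ∈ M.divisors, 2 * 4 ^ M.primeFactors.card := Finset.sum_le_sum hfiber
    _ = M.divisors.card * (2 * 4 ^ M.primeFactors.card) := by
        rw [Finset.sum_const, smul_eq_mul]

lemma repSet_card_rpow (ε : ℝ) (hε : 0 < ε) :
    ∃ C : ℝ, 0 < C ∧ ∀ M : ℕ, 1 ≤ M → ((repSet M).card : ℝ) ≤ C * (M:ℝ)^ε := by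
  obtain ⟨CA, hCA, hA⟩ := exists_bound_pow_omega (ε/2) (by linarith)
  obtain ⟨CB, hCB, hB⟩ := exists_bound_divisors (ε/2) (by linarith)
  refine ⟨2 * CA * CB, by positivity, fun M hM => ?_⟩
  have hMpos : (0:ℝ) < (M:ℝ) := by exact_mod_cast (by omega : 0 < M)
  have h1 : ((repSet M).card : ℝ) ≤ (M.divisors.card : ℝ) * (2 * (4:ℝ) ^ M.primeFactors.card) := by
    have := repSet_card_le hM
    calc ((repSet M).card : ℝ) ≤ ((M.divisors.card * (2 * 4 ^ M.primeFactors.card) : ℕ) : ℝ) := by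
          exact_mod_cast this
      _ = (M.divisors.card : ℝ) * (2 * (4:ℝ) ^ M.primeFactors.card) := by push_cast; ring
  calc ((repSet M).card : ℝ)
      ≤ (M.divisors.card : ℝ) * (2 * (4:ℝ) ^ M.primeFactors.card) := h1
    _ ≤ (CB * (M:ℝ)^(ε/2)) * (2 * (CA * (M:ℝ)^(ε/2))) := by
        apply mul_le_mul (hB M hM) ?_ (by positivity) (by positivity)
        have := hA M hM
        nlinarith [Real.rpow_nonneg hMpos.le (ε/2), pow_nonneg (by norm_num : (0:ℝ) ≤ 4) M.primeFactors.card]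
    _ = 2 * CA * CB * ((M:ℝ)^(ε/2) * (M:ℝ)^(ε/2)) := by ring
    _ = 2 * CA * CB * (M:ℝ)^ε := by
        rw [← Real.rpow_add hMpos]
        norm_num

end G
lemma sq3_eq_zero {x a : ℤ} (h : x^2 + 3*a^2 = 0) : x = 0 ∧ a = 0 := by
  constructor <;> nlinarith [sq_nonneg x, sq_nonneg a]

lemma sq3_le {x a n : ℤ} (h : x^2 + 3*a^2 = n) : x^2 ≤ n ∧ a^2 ≤ n := by
  constructor <;> nlinarith [sq_nonneg x, sq_nonneg a]

lemma sum_sq_le3 {j k l N : ℤ} (hj : j < N) (hk : k < N) (hl : l < N)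
    (hj0 : 0 ≤ j) (hk0 : 0 ≤ k) (hl0 : 0 ≤ l) : j^2 + k^2 + l^2 ≤ 3*N^2 := by nlinarith

theorem stmt_10 (ε : ℝ) (hε : 0 < ε) :
    ∃ C : ℝ, 0 < C ∧ ∀ (m : ℕ) (N : ℕ), 1 ≤ N → ∀ u v : ℤ,
      (((Finset.range N ×ˢ Finset.range N ×ˢ Finset.range N).filter
          (fun p => (p.1 : ℤ) + p.2.1 + p.2.2 = u ∧
            (p.1 : ℤ) * (p.1 + m) + p.2.1 * (p.2.1 + m) + p.2.2 * (p.2.2 + m) = v)).card : ℝ)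
        ≤ C * (N : ℝ) ^ ε := by
  obtain ⟨C₁, hC₁, hrep⟩ := repSet_card_rpow (ε/2) (by linarith)
  refine ⟨C₁ * (18:ℝ)^(ε/2) + 1, by positivity, ?_⟩
  intro m N hN u v
  set S := (Finset.range N ×ˢ Finset.range N ×ˢ Finset.range N).filter
      (fun p => (p.1 : ℤ) + p.2.1 + p.2.2 = u ∧
        (p.1 : ℤ) * (p.1 + m) + p.2.1 * (p.2.1 + m) + p.2.2 * (p.2.2 + m) = v) with hSdef
  have hNpos : (0:ℝ) < (N:ℝ) := by exact_mod_cast (by omega : 0 < N)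
  have hNrpow : (0:ℝ) < (N:ℝ)^ε := Real.rpow_pos_of_pos hNpos ε
  have hNrpow1 : (1:ℝ) ≤ (N:ℝ)^ε := by
    rw [show (1:ℝ) = (1:ℝ)^ε by rw [Real.one_rpow]]
    exact Real.rpow_le_rpow (by norm_num) (by exact_mod_cast hN) hε.le
  rcases S.eq_empty_or_nonempty with hS | ⟨⟨j₀, k₀, l₀⟩, hq₀⟩
  · rw [hS]
    simp only [Finset.card_empty, Nat.cast_zero]
    positivity
  -- membership unfolding helper
  have hmem : ∀ j k l : ℕ, (j, k, l) ∈ S →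
      (j < N ∧ k < N ∧ l < N) ∧ ((j:ℤ) + k + l = u) ∧
        ((j:ℤ)^2 + (k:ℤ)^2 + (l:ℤ)^2 = v - (m:ℤ)*u) := by
    intro j k l hjkl
    rw [hSdef] at hjkl
    simp only [Finset.mem_filter, Finset.mem_product, Finset.mem_range] at hjkl
    obtain ⟨⟨hj, hk, hl⟩, h1, h2⟩ := hjkl
    refine ⟨⟨hj, hk, hl⟩, h1, ?_⟩
    linear_combination h2 - (m:ℤ)*h1
  set w : ℤ := v - (m:ℤ)*u with hwdef
  set Mz : ℤ := 6*w - 2*u^2 with hMzdef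
  -- from the witness, Mz ≥ 0
  obtain ⟨⟨hj₀, hk₀, hl₀⟩, h1₀, h2₀⟩ := hmem j₀ k₀ l₀ hq₀
  have hMzval : ∀ j k l : ℕ, (j:ℤ) + k + l = u → (j:ℤ)^2 + (k:ℤ)^2 + (l:ℤ)^2 = w →
      (3*((j:ℤ)+k) - 2*u)^2 + 3*((j:ℤ) - k)^2 = Mz := by
    intro j k l h1 h2
    rw [hMzdef, ← h2, ← h1]
    ring
  have hMznn : 0 ≤ Mz := by
    rw [← hMzval j₀ k₀ l₀ h1₀ h2₀]
    positivity
  set M : ℕ := Mz.toNat with hMdef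
  have hMcast : (M:ℤ) = Mz := Int.toNat_of_nonneg hMznn
  rcases Nat.eq_zero_or_pos M with hM0 | hM1
  · -- Mz = 0 : at most one solution
    have hMz0 : Mz = 0 := by omega
    have hcard1 : S.card ≤ 1 := by
      apply Finset.card_le_one.mpr
      rintro ⟨j, k, l⟩ hq ⟨j', k', l'⟩ hq'
      obtain ⟨⟨_, _, _⟩, h1, h2⟩ := hmem j k l hq
      obtain ⟨⟨_, _, _⟩, h1', h2'⟩ := hmem j' k' l' hq'
      have e := hMzval j k l h1 h2
      have e' := hMzval j' k' l' h1' h2'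
      rw [hMz0] at e e'
      have hx : 3*((j:ℤ)+k) - 2*u = 0 ∧ (j:ℤ) - k = 0 := sq3_eq_zero e
      have hx' : 3*((j':ℤ)+k') - 2*u = 0 ∧ (j':ℤ) - k' = 0 := sq3_eq_zero e'
      have hjj : (j:ℤ) = j' ∧ (k:ℤ) = k' := by
        obtain ⟨ha, hb⟩ := hx
        obtain ⟨ha', hb'⟩ := hx'
        constructor <;> omega
      have hll : (l:ℤ) = l' := by
        obtain ⟨hj1, hk1⟩ := hjj
        omega
      have : j = j' ∧ k = k' ∧ l = l' := by
        obtain ⟨hj1, hk1⟩ := hjj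
        exact ⟨by exact_mod_cast hj1, by exact_mod_cast hk1, by exact_mod_cast hll⟩
      obtain ⟨rfl, rfl, rfl⟩ := this
      rfl
    have h18 : (0:ℝ) ≤ C₁ * (18:ℝ)^(ε/2) := by positivity
    calc (S.card : ℝ) ≤ 1 := by exact_mod_cast hcard1
      _ ≤ (N:ℝ)^ε := hNrpow1
      _ = 1 * (N:ℝ)^ε := (one_mul _).symm
      _ ≤ (C₁ * (18:ℝ)^(ε/2) + 1) * (N:ℝ)^ε :=
          mul_le_mul_of_nonneg_right (by linarith) hNrpow.le
  · -- main case: inject into repSet M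
    have hinj : S.card ≤ (repSet M).card := by
      apply Finset.card_le_card_of_injOn
        (fun q => (3*((q.1:ℤ) + q.2.1) - 2*u, (q.1:ℤ) - q.2.1))
      · rintro ⟨j, k, l⟩ hq
        obtain ⟨⟨_, _, _⟩, h1, h2⟩ := hmem j k l hq
        have e := hMzval j k l h1 h2
        rw [← hMcast] at e
        obtain ⟨hb1, hb2⟩ := sq3_le e
        obtain ⟨hb1a, hb1b⟩ := sq_le_Icc_bound hM1 hb1
        obtain ⟨hb2a, hb2b⟩ := sq_le_Icc_bound hM1 hb2
        simp only [Finset.mem_coe, repSet, Finset.mem_filter, Finset.mem_product, Finset.mem_Icc]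
        exact ⟨⟨⟨hb1a, hb1b⟩, ⟨hb2a, hb2b⟩⟩, e⟩
      · rintro ⟨j, k, l⟩ hq ⟨j', k', l'⟩ hq' he
        simp only [Finset.mem_coe] at hq hq'
        obtain ⟨⟨_, _, _⟩, h1, h2⟩ := hmem j k l hq
        obtain ⟨⟨_, _, _⟩, h1', h2'⟩ := hmem j' k' l' hq'
        simp only [Prod.mk.injEq] at he
        obtain ⟨he1, he2⟩ := he
        have hjj : (j:ℤ) = j' ∧ (k:ℤ) = k' := by constructor <;> omega
        have hll : (l:ℤ) = l' := by
          obtain ⟨ha, hb⟩ := hjj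
          omega
        have : j = j' ∧ k = k' ∧ l = l' := by
          obtain ⟨hj1, hk1⟩ := hjj
          exact ⟨by exact_mod_cast hj1, by exact_mod_cast hk1, by exact_mod_cast hll⟩
        obtain ⟨rfl, rfl, rfl⟩ := this
        rfl
    -- M ≤ 18 N^2
    have hMle : (M:ℤ) ≤ 18 * (N:ℤ)^2 := by
      have hw3 : w ≤ 3 * (N:ℤ)^2 := by
        rw [← h2₀]
        exact sum_sq_le3 (by exact_mod_cast hj₀) (by exact_mod_cast hk₀)
          (by exact_mod_cast hl₀) (by positivity) (by positivity) (by positivity)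
      calc (M:ℤ) = Mz := hMcast
        _ ≤ 6*w := by rw [hMzdef]; nlinarith [sq_nonneg u]

        _ ≤ 18 * (N:ℤ)^2 := by linarith
    have hMleR : (M:ℝ) ≤ 18 * (N:ℝ)^(2:ℕ) := by exact_mod_cast hMle
    have hMrpow : ((M:ℝ))^(ε/2) ≤ (18:ℝ)^(ε/2) * (N:ℝ)^ε := by
      calc ((M:ℝ))^(ε/2) ≤ (18 * (N:ℝ)^(2:ℕ))^(ε/2) :=
            Real.rpow_le_rpow (by positivity) hMleR (by linarith)
        _ = (18:ℝ)^(ε/2) * ((N:ℝ)^(2:ℕ))^(ε/2) :=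
            Real.mul_rpow (by norm_num) (by positivity)
        _ = (18:ℝ)^(ε/2) * (N:ℝ)^ε := by
            congr 1
            rw [← Real.rpow_natCast (N:ℝ) 2, ← Real.rpow_mul hNpos.le]
            congr 1
            ring
    calc (S.card : ℝ) ≤ ((repSet M).card : ℝ) := by exact_mod_cast hinj
      _ ≤ C₁ * ((M:ℝ))^(ε/2) := hrep M hM1
      _ ≤ C₁ * ((18:ℝ)^(ε/2) * (N:ℝ)^ε) := by
          apply mul_le_mul_of_nonneg_left hMrpow hC₁.le
      _ = (C₁ * (18:ℝ)^(ε/2)) * (N:ℝ)^ε := by ring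
      _ ≤ (C₁ * (18:ℝ)^(ε/2) + 1) * (N:ℝ)^ε :=
          mul_le_mul_of_nonneg_right (by linarith) hNrpow.le
end

section
/- Suppose that for every ε > 0 there is C(ε) with ‖Σ_{k=0}^{N−1} a_k e^{−itk(k+n−1)} e^{ikθ}‖_{L⁶_t L⁶_θ([0,2π]²)} ≤ C(ε) N^ε ‖a‖_{ℓ²} for all N and all (a_k). Then for every ε > 0 there is C′(ε) with ‖ sup_{t∈[0,2π]} |Σ_{k=0}^{N−1} a_k e^{−itk(k+n−1)} e^{ikθ}| ‖_{L⁶_θ([0,2π])} ≤ C′(ε) N^{1/3+ε} ‖a‖_{ℓ²}. -/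
set_option maxHeartbeats 1600000
open Complex Real MeasureTheory intervalIntegral Set

noncomputable def MVF (n N : ℕ) (a : ℕ → ℂ) (t θ : ℝ) : ℂ :=
  ∑ k ∈ Finset.range N,
    a k * Complex.exp (-Complex.I * t * (k * (k + (n-1):ℕ)))
        * Complex.exp (Complex.I * k * θ)

theorem MVF_cont (n N : ℕ) (a : ℕ → ℂ) : Continuous (fun p : ℝ × ℝ => MVF n N a p.1 p.2) := by
  unfold MVF; fun_prop

theorem MVF_norm_le (n N : ℕ) (a : ℕ → ℂ) (t θ : ℝ) :
    ‖MVF n N a t θ‖ ≤ ∑ k ∈ Finset.range N, ‖a k‖ := by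
  refine le_trans (norm_sum_le _ _) (Finset.sum_le_sum fun k hk => ?_)
  have e1 : -Complex.I * (t:ℂ) * ((k:ℂ) * ((k + (n-1):ℕ) : ℂ))
      = ((-(t * (k * (k + (n-1):ℕ))) : ℝ) : ℂ) * Complex.I := by push_cast; ring
  have e2 : Complex.I * (k:ℂ) * (θ:ℂ) = (((k * θ) : ℝ) : ℂ) * Complex.I := by push_cast; ring
  rw [norm_mul, norm_mul, e1, e2, Complex.norm_exp_ofReal_mul_I, Complex.norm_exp_ofReal_mul_I]
  simp

noncomputable def MVD (n N : ℕ) (a : ℕ → ℂ) (a' : ℕ → ℂ) (θ s : ℝ) : ℝ :=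
  3 * (((MVF n N a s θ).re)^2 + ((MVF n N a s θ).im)^2)^2 *
    (2*(MVF n N a s θ).re*(MVF n N a' s θ).re + 2*(MVF n N a s θ).im*(MVF n N a' s θ).im)

theorem MVD_cont (n N : ℕ) (a a' : ℕ → ℂ) : Continuous (fun p : ℝ × ℝ => MVD n N a a' p.1 p.2) := by
  have h := MVF_cont n N a
  have h' := MVF_cont n N a'
  unfold MVD
  fun_prop

theorem norm_pow_six (z : ℂ) : ‖z‖^6 = (z.re^2+z.im^2)^3 := by
  rw [show (6:ℕ) = 2*3 from rfl, pow_mul, Complex.sq_norm,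
    Complex.normSq_apply]
  ring_nf

theorem MVD_hasDeriv (n N : ℕ) (a a' : ℕ → ℂ) (θ t : ℝ)
    (hF : HasDerivAt (fun t => MVF n N a t θ) (MVF n N a' t θ) t) :
    HasDerivAt (fun s => ‖MVF n N a s θ‖^6) (MVD n N a a' θ t) t := by
  have hre : HasDerivAt (fun s => (MVF n N a s θ).re) ((MVF n N a' t θ).re) t :=
    (Complex.reCLM.hasFDerivAt.comp_hasDerivAt t hF)
  have him : HasDerivAt (fun s => (MVF n N a s θ).im) ((MVF n N a' t θ).im) t :=
    (Complex.imCLM.hasFDerivAt.comp_hasDerivAt t hF)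
  have hu : HasDerivAt (fun s => ((MVF n N a s θ).re)^2 + ((MVF n N a s θ).im)^2)
      (2*(MVF n N a t θ).re*(MVF n N a' t θ).re + 2*(MVF n N a t θ).im*(MVF n N a' t θ).im) t := by
    have := (hre.fun_pow 2).add (him.fun_pow 2)
    exact this.congr_deriv (by norm_num <;> ring)
  have hg := hu.fun_pow 3
  simp only [norm_pow_six]
  exact hg.congr_deriv (by unfold MVD; norm_num <;> ring)

theorem MVD_bound (n N : ℕ) (a a' : ℕ → ℂ) (θ s : ℝ) :
    |MVD n N a a' θ s| ≤ 12 * ‖MVF n N a s θ‖^5 * ‖MVF n N a' s θ‖ := by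
  set z := MVF n N a s θ
  set w := MVF n N a' s θ
  have hzre : |z.re| ≤ ‖z‖ := Complex.abs_re_le_norm z
  have hzim : |z.im| ≤ ‖z‖ := Complex.abs_im_le_norm z
  have hwre : |w.re| ≤ ‖w‖ := Complex.abs_re_le_norm w
  have hwim : |w.im| ≤ ‖w‖ := Complex.abs_im_le_norm w
  have hz : (0:ℝ) ≤ ‖z‖ := norm_nonneg _
  have hw : (0:ℝ) ≤ ‖w‖ := norm_nonneg _
  have hu : z.re^2 + z.im^2 = ‖z‖^2 := by
    rw [Complex.sq_norm, Complex.normSq_apply]; ring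
  have pr : |z.re*w.re| ≤ ‖z‖*‖w‖ := by
    rw [abs_mul]; exact mul_le_mul hzre hwre (abs_nonneg _) hz
  have pi : |z.im*w.im| ≤ ‖z‖*‖w‖ := by
    rw [abs_mul]; exact mul_le_mul hzim hwim (abs_nonneg _) hz
  have h1 : |2*z.re*w.re + 2*z.im*w.im| ≤ 4 * ‖z‖ * ‖w‖ := by
    have t1 := le_abs_self (z.re*w.re)
    have t2 := neg_abs_le (z.re*w.re)
    have t3 := le_abs_self (z.im*w.im)
    have t4 := neg_abs_le (z.im*w.im)
    apply abs_le.mpr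
    constructor <;> nlinarith
  calc |MVD n N a a' θ s| = 3 * (‖z‖^2)^2 * |2*z.re*w.re + 2*z.im*w.im| := by
        unfold MVD
        rw [abs_mul, _root_.abs_of_nonneg (by positivity : (0:ℝ) ≤ 3*(z.re^2+z.im^2)^2), hu]
    _ ≤ 3 * (‖z‖^2)^2 * (4 * ‖z‖ * ‖w‖) := by
        apply mul_le_mul_of_nonneg_left h1; positivity
    _ = 12 * ‖z‖^5 * ‖w‖ := by ring

noncomputable def MVda (n : ℕ) (a : ℕ → ℂ) (k : ℕ) : ℂ :=
  (-Complex.I * ((k:ℂ) * ((k + (n-1):ℕ) : ℂ))) * a k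

theorem MVF_deriv (n N : ℕ) (a : ℕ → ℂ) (θ t : ℝ) :
    HasDerivAt (fun t => MVF n N a t θ) (MVF n N (MVda n a) t θ) t := by
  unfold MVF MVda
  apply HasDerivAt.fun_sum
  intro k hk
  set c : ℂ := (k:ℂ) * ((k + (n-1):ℕ) : ℂ) with hc
  have h1 : HasDerivAt (fun z : ℂ => Complex.exp ((-Complex.I*c) * z))
      ((-Complex.I*c) * Complex.exp ((-Complex.I*c) * (t:ℂ))) (t:ℂ) := by
    have := (((hasDerivAt_id (t:ℂ)).const_mul (-Complex.I*c)).cexp)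
    simp only [id_eq, mul_one] at this
    exact this.congr_deriv (by ring)
  have h2 := h1.comp_ofReal
  have h4 : HasDerivAt (fun t : ℝ => a k * Complex.exp ((-Complex.I*c) * (t:ℂ)) * Complex.exp (Complex.I * k * θ))
      (a k * ((-Complex.I*c) * Complex.exp ((-Complex.I*c) * (t:ℂ))) * Complex.exp (Complex.I * k * θ)) t :=
    (h2.const_mul (a k)).mul_const _
  simp only [show ∀ x : ℝ, -Complex.I * (x:ℂ) * c = (-Complex.I*c) * (x:ℂ) from fun x => by ring]
  exact h4.congr_deriv (by ring)


theorem MVF_cont_t (n N : ℕ) (a : ℕ → ℂ) (θ : ℝ) : Continuous (fun s : ℝ => MVF n N a s θ) := by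
  unfold MVF; fun_prop

theorem MVD_cont_s (n N : ℕ) (a a' : ℕ → ℂ) (θ : ℝ) : Continuous (fun s : ℝ => MVD n N a a' θ s) := by
  unfold MVD MVF; fun_prop

theorem MV_sup_bound (n N : ℕ) (a : ℕ → ℂ) (θ : ℝ) {t : ℝ} (ht : t ∈ Set.Icc (0:ℝ) (2*π)) :
    ‖MVF n N a t θ‖^6 ≤
      (2*π)⁻¹ * (∫ s in (0:ℝ)..(2*π), ‖MVF n N a s θ‖^6)
      + 24 * ∫ s in (0:ℝ)..(2*π), ‖MVF n N a s θ‖^5 * ‖MVF n N (MVda n a) s θ‖ := by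
  have hπ : (0:ℝ) < 2*π := by positivity
  set g : ℝ → ℝ := fun s => ‖MVF n N a s θ‖^6 with hg
  set D : ℝ → ℝ := fun s => MVD n N a (MVda n a) θ s with hDdef
  have hD : ∀ s : ℝ, HasDerivAt g (D s) s := fun s =>
    MVD_hasDeriv n N a (MVda n a) θ s (MVF_deriv n N a θ s)
  have contF : Continuous (fun s : ℝ => MVF n N a s θ) := MVF_cont_t n N a θ
  have contF' : Continuous (fun s : ℝ => MVF n N (MVda n a) s θ) := MVF_cont_t n N (MVda n a) θ
  have contD : Continuous D := MVD_cont_s n N a (MVda n a) θ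
  have contg : Continuous g := (contF.norm.pow 6)
  have contFF' : Continuous (fun s : ℝ => ‖MVF n N a s θ‖^5 * ‖MVF n N (MVda n a) s θ‖) :=
    (contF.norm.pow 5).mul contF'.norm
  have hint : ∀ u v : ℝ, ∫ s in u..v, D s = g v - g u := fun u v =>
    intervalIntegral.integral_eq_sub_of_hasDerivAt (fun x _ => hD x)
      (contD.intervalIntegrable _ _)
  set K : ℝ := ∫ s in (0:ℝ)..(2*π), |D s| with hK
  have habs : ∀ u ∈ Set.Icc (0:ℝ) (2*π), |∫ s in (0:ℝ)..u, D s| ≤ K := by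
    intro u hu
    have h1 : |∫ s in (0:ℝ)..u, D s| ≤ ∫ s in (0:ℝ)..u, |D s| :=
      intervalIntegral.abs_integral_le_integral_abs hu.1
    have h2 : K = (∫ s in (0:ℝ)..u, |D s|) + ∫ s in u..(2*π), |D s| :=
      (intervalIntegral.integral_add_adjacent_intervals
        (contD.abs.intervalIntegrable _ _) (contD.abs.intervalIntegrable _ _)).symm
    have h3 : (0:ℝ) ≤ ∫ s in u..(2*π), |D s| :=
      intervalIntegral.integral_nonneg hu.2 (fun _ _ => abs_nonneg _)
    linarith
  have key : ∀ s ∈ Set.Icc (0:ℝ) (2*π), g t ≤ g s + 2*K := by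
    intro s hs
    have e1 : g t - g s = (∫ x in (0:ℝ)..t, D x) - ∫ x in (0:ℝ)..s, D x := by
      rw [hint 0 t, hint 0 s]; ring
    have := habs t ht
    have := habs s hs
    have h4 := abs_le.mp (habs t ht)
    have h5 := abs_le.mp (habs s hs)
    linarith
  -- average over s
  have havg : (2*π) * g t ≤ (∫ s in (0:ℝ)..(2*π), g s) + (2*π) * (2*K) := by
    have h6 : ∫ s in (0:ℝ)..(2*π), g t = (2*π) * g t := by
      simp [intervalIntegral.integral_const, smul_eq_mul]
    have h7 : ∫ s in (0:ℝ)..(2*π), (g s + 2*K) = (∫ s in (0:ℝ)..(2*π), g s) + (2*π)*(2*K) := by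
      rw [intervalIntegral.integral_add (contg.intervalIntegrable _ _)
        (intervalIntegrable_const)]
      simp [intervalIntegral.integral_const, smul_eq_mul]
      ring
    calc (2*π) * g t = ∫ s in (0:ℝ)..(2*π), g t := h6.symm
      _ ≤ ∫ s in (0:ℝ)..(2*π), (g s + 2*K) := by
          apply intervalIntegral.integral_mono_on hπ.le intervalIntegrable_const
            ((contg.intervalIntegrable _ _).add intervalIntegrable_const)
          intro s hs; linarith [key s hs]
      _ = _ := h7
  have hKle : K ≤ 12 * ∫ s in (0:ℝ)..(2*π), ‖MVF n N a s θ‖^5 * ‖MVF n N (MVda n a) s θ‖ := by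
    rw [hK, ← intervalIntegral.integral_const_mul]
    apply intervalIntegral.integral_mono_on hπ.le (contD.abs.intervalIntegrable _ _)
      ((continuous_const.mul contFF').intervalIntegrable _ _)
    intro s _
    simpa [mul_assoc] using MVD_bound n N a (MVda n a) θ s
  have := mul_le_mul_of_nonneg_left havg (inv_nonneg.mpr hπ.le)
  rw [← mul_assoc, inv_mul_cancel₀ hπ.ne', one_mul] at this
  calc g t ≤ (2*π)⁻¹ * ((∫ s in (0:ℝ)..(2*π), g s) + 2*π*(2*K)) := this
    _ = (2*π)⁻¹ * (∫ s in (0:ℝ)..(2*π), g s) + 2*K := by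
        field_simp
    _ ≤ _ := by
        have h24 : 2*K ≤ 24 * ∫ s in (0:ℝ)..(2*π), ‖MVF n N a s θ‖^5 * ‖MVF n N (MVda n a) s θ‖ := by
          linarith
        exact add_le_add le_rfl h24

theorem MV_sup6 (n N : ℕ) (a : ℕ → ℂ) (θ : ℝ) :
    (⨆ t ∈ Set.Icc (0:ℝ) (2*π), ‖MVF n N a t θ‖)^6 ≤
      (2*π)⁻¹ * (∫ s in (0:ℝ)..(2*π), ‖MVF n N a s θ‖^6)
      + 24 * ∫ s in (0:ℝ)..(2*π), ‖MVF n N a s θ‖^5 * ‖MVF n N (MVda n a) s θ‖ := by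
  set R : ℝ := (2*π)⁻¹ * (∫ s in (0:ℝ)..(2*π), ‖MVF n N a s θ‖^6)
      + 24 * ∫ s in (0:ℝ)..(2*π), ‖MVF n N a s θ‖^5 * ‖MVF n N (MVda n a) s θ‖ with hR
  have hR0 : 0 ≤ R := by
    have h1 : 0 ≤ ∫ s in (0:ℝ)..(2*π), ‖MVF n N a s θ‖^6 :=
      intervalIntegral.integral_nonneg (by positivity) (fun _ _ => by positivity)
    have h2 : 0 ≤ ∫ s in (0:ℝ)..(2*π), ‖MVF n N a s θ‖^5 * ‖MVF n N (MVda n a) s θ‖ :=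
      intervalIntegral.integral_nonneg (by positivity) (fun _ _ => by positivity)
    have : (0:ℝ) < 2*π := by positivity
    positivity
  have hsup : (⨆ t ∈ Set.Icc (0:ℝ) (2*π), ‖MVF n N a t θ‖) ≤ R ^ ((1:ℝ)/6) := by
    refine Real.iSup_le (fun t => Real.iSup_le (fun ht => ?_) (Real.rpow_nonneg hR0 _))
      (Real.rpow_nonneg hR0 _)
    have h6 : ‖MVF n N a t θ‖^6 ≤ R := MV_sup_bound n N a θ ht
    have : ‖MVF n N a t θ‖ = ((‖MVF n N a t θ‖^6 : ℝ)) ^ ((1:ℝ)/6) := by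
      rw [← Real.rpow_natCast ‖MVF n N a t θ‖ 6, ← Real.rpow_mul (norm_nonneg _)]
      norm_num
    rw [this]
    exact Real.rpow_le_rpow (by positivity) h6 (by norm_num)
  have hsup0 : 0 ≤ ⨆ t ∈ Set.Icc (0:ℝ) (2*π), ‖MVF n N a t θ‖ :=
    Real.iSup_nonneg fun t => Real.iSup_nonneg fun _ => norm_nonneg _
  calc (⨆ t ∈ Set.Icc (0:ℝ) (2*π), ‖MVF n N a t θ‖)^6 ≤ (R ^ ((1:ℝ)/6))^6 :=
        pow_le_pow_left₀ hsup0 hsup 6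
    _ = R := by
        rw [← Real.rpow_natCast (R ^ ((1:ℝ)/6)) 6, ← Real.rpow_mul hR0]
        norm_num

theorem myHolder {μ : Measure ℝ} [IsFiniteMeasure μ] {f g : ℝ → ℝ}
    (hfm : AEStronglyMeasurable f μ) (hgm : AEStronglyMeasurable g μ)
    (hf0 : ∀ x, 0 ≤ f x) (hg0 : ∀ x, 0 ≤ g x)
    {Mf Mg : ℝ} (hfb : ∀ x, f x ≤ Mf) (hgb : ∀ x, g x ≤ Mg) :
    ∫ x, f x * g x ∂μ ≤
      (∫ x, f x ^ ((6:ℝ)/5) ∂μ) ^ ((5:ℝ)/6) * (∫ x, g x ^ (6:ℝ) ∂μ) ^ ((1:ℝ)/6) := by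
  have hpq : Real.HolderConjugate (6/5) 6 := ⟨by norm_num, by norm_num, by norm_num⟩
  have hfL : MemLp f (ENNReal.ofReal (6/5)) μ :=
    memLp_of_bounded (Filter.Eventually.of_forall fun x => ⟨hf0 x, hfb x⟩) hfm _
  have hgL : MemLp g (ENNReal.ofReal 6) μ :=
    memLp_of_bounded (Filter.Eventually.of_forall fun x => ⟨hg0 x, hgb x⟩) hgm _
  have h := MeasureTheory.integral_mul_le_Lp_mul_Lq_of_nonneg hpq
    (Filter.Eventually.of_forall hf0) (Filter.Eventually.of_forall hg0) hfL hgL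
  convert h using 3 <;> norm_num

theorem rpow_pow_six (x : ℝ) (hx : 0 ≤ x) : (x^(5:ℕ)) ^ ((6:ℝ)/5) = x^(6:ℕ) := by
  rw [← Real.rpow_natCast x 5, ← Real.rpow_mul hx, ← Real.rpow_natCast x 6]
  norm_num

theorem MV_holder_t (n N : ℕ) (a a' : ℕ → ℂ) (θ : ℝ) :
    (∫ s in (0:ℝ)..(2*π), ‖MVF n N a s θ‖^5 * ‖MVF n N a' s θ‖)
      ≤ (∫ s in (0:ℝ)..(2*π), ‖MVF n N a s θ‖^6) ^ ((5:ℝ)/6)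
        * (∫ s in (0:ℝ)..(2*π), ‖MVF n N a' s θ‖^6) ^ ((1:ℝ)/6) := by
  have hπ : (0:ℝ) ≤ 2*π := by positivity
  rw [intervalIntegral.integral_of_le hπ, intervalIntegral.integral_of_le hπ,
    intervalIntegral.integral_of_le hπ]
  set μ : Measure ℝ := volume.restrict (Set.Ioc (0:ℝ) (2*π))
  have contF : Continuous (fun s : ℝ => MVF n N a s θ) := MVF_cont_t n N a θ
  have contF' : Continuous (fun s : ℝ => MVF n N a' s θ) := MVF_cont_t n N a' θ
  have h := myHolder (μ := μ)
    (f := fun s => ‖MVF n N a s θ‖^5) (g := fun s => ‖MVF n N a' s θ‖)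
    ((contF.norm.pow 5).aestronglyMeasurable) (contF'.norm.aestronglyMeasurable)
    (fun x => by positivity) (fun x => norm_nonneg _)
    (Mf := (∑ k ∈ Finset.range N, ‖a k‖)^5) (Mg := ∑ k ∈ Finset.range N, ‖a' k‖)
    (fun x => pow_le_pow_left₀ (norm_nonneg _) (MVF_norm_le n N a x θ) 5)
    (fun x => MVF_norm_le n N a' x θ)
  calc ∫ s, ‖MVF n N a s θ‖^5 * ‖MVF n N a' s θ‖ ∂μ
      ≤ (∫ s, (‖MVF n N a s θ‖^5) ^ ((6:ℝ)/5) ∂μ) ^ ((5:ℝ)/6)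
        * (∫ s, ‖MVF n N a' s θ‖ ^ (6:ℝ) ∂μ) ^ ((1:ℝ)/6) := h
    _ = (∫ s, ‖MVF n N a s θ‖^6 ∂μ) ^ ((5:ℝ)/6)
        * (∫ s, ‖MVF n N a' s θ‖^6 ∂μ) ^ ((1:ℝ)/6) := by
        congr 2
        · exact integral_congr_ae (Filter.Eventually.of_forall fun s => by
            show (‖MVF n N a s θ‖^(5:ℕ)) ^ ((6:ℝ)/5) = ‖MVF n N a s θ‖ ^ (6:ℕ)
            exact rpow_pow_six _ (norm_nonneg _))
        · exact integral_congr_ae (Filter.Eventually.of_forall fun s => by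
            show ‖MVF n N a' s θ‖ ^ ((6:ℝ)) = ‖MVF n N a' s θ‖ ^ (6:ℕ)
            rw [show ((6:ℝ)) = ((6:ℕ):ℝ) by norm_num, Real.rpow_natCast])

theorem MV_contA (n N : ℕ) (a : ℕ → ℂ) :
    Continuous fun θ : ℝ => ∫ s in (0:ℝ)..(2*π), ‖MVF n N a s θ‖^6 := by
  apply intervalIntegral.continuous_parametric_intervalIntegral_of_continuous'
    (f := fun θ s => ‖MVF n N a s θ‖^6)
  have : Function.uncurry (fun θ s => ‖MVF n N a s θ‖^6)
      = fun p : ℝ × ℝ => ‖MVF n N a p.2 p.1‖^6 := rfl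
  rw [this]
  unfold MVF; fun_prop

theorem MV_A_le (n N : ℕ) (a : ℕ → ℂ) (θ : ℝ) :
    (∫ s in (0:ℝ)..(2*π), ‖MVF n N a s θ‖^6) ≤ (2*π) * (∑ k ∈ Finset.range N, ‖a k‖)^6 := by
  have hπ : (0:ℝ) ≤ 2*π := by positivity
  have h := intervalIntegral.integral_mono_on hπ
    (((MVF_cont_t n N a θ).norm.pow 6).intervalIntegrable _ _)
    (_root_.intervalIntegrable_const (μ := volume) (c := (∑ k ∈ Finset.range N, ‖a k‖)^6))
    (fun s _ => pow_le_pow_left₀ (norm_nonneg _) (MVF_norm_le n N a s θ) 6)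
  rw [intervalIntegral.integral_const, smul_eq_mul, sub_zero] at h
  exact h

theorem MV_A_nonneg (n N : ℕ) (a : ℕ → ℂ) (θ : ℝ) :
    0 ≤ ∫ s in (0:ℝ)..(2*π), ‖MVF n N a s θ‖^6 :=
  intervalIntegral.integral_nonneg (by positivity) (fun _ _ => by positivity)

theorem MV_holder_theta (n N : ℕ) (a a' : ℕ → ℂ) :
    (∫ θ in (0:ℝ)..(2*π), (∫ s in (0:ℝ)..(2*π), ‖MVF n N a s θ‖^6) ^ ((5:ℝ)/6)
        * (∫ s in (0:ℝ)..(2*π), ‖MVF n N a' s θ‖^6) ^ ((1:ℝ)/6))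
      ≤ (∫ θ in (0:ℝ)..(2*π), ∫ s in (0:ℝ)..(2*π), ‖MVF n N a s θ‖^6) ^ ((5:ℝ)/6)
        * (∫ θ in (0:ℝ)..(2*π), ∫ s in (0:ℝ)..(2*π), ‖MVF n N a' s θ‖^6) ^ ((1:ℝ)/6) := by
  have hπ : (0:ℝ) ≤ 2*π := by positivity
  set A : ℝ → ℝ := fun θ => ∫ s in (0:ℝ)..(2*π), ‖MVF n N a s θ‖^6 with hA
  set B : ℝ → ℝ := fun θ => ∫ s in (0:ℝ)..(2*π), ‖MVF n N a' s θ‖^6 with hB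
  rw [intervalIntegral.integral_of_le hπ, intervalIntegral.integral_of_le hπ,
    intervalIntegral.integral_of_le hπ]
  have h := myHolder (μ := volume.restrict (Set.Ioc (0:ℝ) (2*π)))
    (f := fun θ => (A θ) ^ ((5:ℝ)/6)) (g := fun θ => (B θ) ^ ((1:ℝ)/6))
    (((MV_contA n N a).rpow_const (fun x => Or.inr (by norm_num))).aestronglyMeasurable)
    (((MV_contA n N a').rpow_const (fun x => Or.inr (by norm_num))).aestronglyMeasurable)
    (fun x => Real.rpow_nonneg (MV_A_nonneg n N a x) _)
    (fun x => Real.rpow_nonneg (MV_A_nonneg n N a' x) _)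
    (Mf := ((2*π) * (∑ k ∈ Finset.range N, ‖a k‖)^6) ^ ((5:ℝ)/6))
    (Mg := ((2*π) * (∑ k ∈ Finset.range N, ‖a' k‖)^6) ^ ((1:ℝ)/6))
    (fun x => Real.rpow_le_rpow (MV_A_nonneg n N a x) (MV_A_le n N a x) (by norm_num))
    (fun x => Real.rpow_le_rpow (MV_A_nonneg n N a' x) (MV_A_le n N a' x) (by norm_num))
  calc ∫ θ, (A θ) ^ ((5:ℝ)/6) * (B θ) ^ ((1:ℝ)/6) ∂(volume.restrict (Set.Ioc (0:ℝ) (2*π)))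
      ≤ (∫ θ, ((A θ) ^ ((5:ℝ)/6)) ^ ((6:ℝ)/5) ∂(volume.restrict (Set.Ioc (0:ℝ) (2*π)))) ^ ((5:ℝ)/6)
        * (∫ θ, ((B θ) ^ ((1:ℝ)/6)) ^ ((6:ℝ)) ∂(volume.restrict (Set.Ioc (0:ℝ) (2*π)))) ^ ((1:ℝ)/6) := h
    _ = (∫ θ, A θ ∂(volume.restrict (Set.Ioc (0:ℝ) (2*π)))) ^ ((5:ℝ)/6)
        * (∫ θ, B θ ∂(volume.restrict (Set.Ioc (0:ℝ) (2*π)))) ^ ((1:ℝ)/6) := by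
        congr 2
        · exact integral_congr_ae (Filter.Eventually.of_forall fun x => by
            show ((A x) ^ ((5:ℝ)/6)) ^ ((6:ℝ)/5) = A x
            rw [← Real.rpow_mul (MV_A_nonneg n N a x),
              show ((5:ℝ)/6 * (6/5)) = 1 by norm_num, Real.rpow_one])
        · exact integral_congr_ae (Filter.Eventually.of_forall fun x => by
            show ((B x) ^ ((1:ℝ)/6)) ^ ((6:ℝ)) = B x
            rw [← Real.rpow_mul (MV_A_nonneg n N a' x),
              show ((1:ℝ)/6 * 6) = 1 by norm_num, Real.rpow_one])

theorem MV_swap {φ : ℝ → ℝ → ℝ} (hc : Continuous fun p : ℝ × ℝ => φ p.1 p.2) :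
    ∫ t in (0:ℝ)..(2*π), ∫ θ in (0:ℝ)..(2*π), φ t θ
      = ∫ θ in (0:ℝ)..(2*π), ∫ t in (0:ℝ)..(2*π), φ t θ := by
  have hπ : (0:ℝ) ≤ 2*π := by positivity
  rw [intervalIntegral.integral_of_le hπ, intervalIntegral.integral_of_le hπ]
  simp_rw [intervalIntegral.integral_of_le hπ]
  apply MeasureTheory.integral_integral_swap
  rw [Measure.prod_restrict]
  have hc' : Continuous (Function.uncurry φ) := by
    have : Function.uncurry φ = fun p : ℝ × ℝ => φ p.1 p.2 := rfl
    rw [this]; exact hc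
  have hint : IntegrableOn (Function.uncurry φ)
      (Set.Icc (0:ℝ) (2*π) ×ˢ Set.Icc (0:ℝ) (2*π)) (volume.prod volume) :=
    (hc'.continuousOn).integrableOn_compact (isCompact_Icc.prod isCompact_Icc)
  exact hint.mono_set (Set.prod_mono Set.Ioc_subset_Icc_self Set.Ioc_subset_Icc_self)

theorem MVda_sum_le (n N : ℕ) (hN : 1 ≤ N) (a : ℕ → ℂ) :
    (∑ k ∈ Finset.range N, ‖MVda n a k‖^2) ^ ((1:ℝ)/2)
      ≤ ((n:ℝ)+1)*(N:ℝ)^2 * (∑ k ∈ Finset.range N, ‖a k‖^2) ^ ((1:ℝ)/2) := by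
  set c : ℝ := ((n:ℝ)+1)*(N:ℝ)^2 with hc
  have hc0 : 0 ≤ c := by positivity
  have hsum : (∑ k ∈ Finset.range N, ‖MVda n a k‖^2)
      ≤ c^2 * ∑ k ∈ Finset.range N, ‖a k‖^2 := by
    rw [Finset.mul_sum]
    apply Finset.sum_le_sum
    intro k hk
    have hkN : (k:ℝ) ≤ (N:ℝ) := by
      exact_mod_cast (Finset.mem_range.mp hk).le
    have hkn : ((k + (n-1) : ℕ) : ℝ) ≤ (N:ℝ) + (n:ℝ) := by
      have : (k + (n-1) : ℕ) ≤ N + n := by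
        have := (Finset.mem_range.mp hk).le
        omega
      exact_mod_cast this
    have hN1 : (1:ℝ) ≤ (N:ℝ) := by exact_mod_cast hN
    have hnorm : ‖MVda n a k‖ = (k:ℝ) * ((k + (n-1) : ℕ) : ℝ) * ‖a k‖ := by
      unfold MVda
      rw [norm_mul, norm_mul, norm_mul, norm_neg, Complex.norm_I, one_mul,
        Complex.norm_natCast, Complex.norm_natCast]
    rw [hnorm]
    have hcoef : (k:ℝ) * ((k + (n-1) : ℕ) : ℝ) ≤ c := by
      rw [hc]
      have h1 : (0:ℝ) ≤ (k:ℝ) := Nat.cast_nonneg k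
      have h2 : (0:ℝ) ≤ ((k + (n-1) : ℕ) : ℝ) := Nat.cast_nonneg _
      nlinarith [mul_le_mul hkN hkn h2 (Nat.cast_nonneg (α := ℝ) N),
        mul_le_mul_of_nonneg_left hN1 (by positivity : (0:ℝ) ≤ (n:ℝ)*(N:ℝ))]
    have h3 : (0:ℝ) ≤ (k:ℝ) * ((k + (n-1) : ℕ) : ℝ) := by positivity
    nlinarith [mul_le_mul_of_nonneg_right (mul_le_mul hcoef hcoef h3 hc0) (sq_nonneg ‖a k‖)]
  have hS0 : 0 ≤ ∑ k ∈ Finset.range N, ‖a k‖^2 :=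
    Finset.sum_nonneg fun k _ => sq_nonneg _
  have h4 : (∑ k ∈ Finset.range N, ‖MVda n a k‖^2) ^ ((1:ℝ)/2)
      ≤ (c^2 * ∑ k ∈ Finset.range N, ‖a k‖^2) ^ ((1:ℝ)/2) :=
    Real.rpow_le_rpow (Finset.sum_nonneg fun k _ => sq_nonneg _) hsum (by norm_num)
  calc (∑ k ∈ Finset.range N, ‖MVda n a k‖^2) ^ ((1:ℝ)/2)
      ≤ (c^2 * ∑ k ∈ Finset.range N, ‖a k‖^2) ^ ((1:ℝ)/2) := h4
    _ = c * (∑ k ∈ Finset.range N, ‖a k‖^2) ^ ((1:ℝ)/2) := by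
        rw [Real.mul_rpow (sq_nonneg c) hS0, ← Real.rpow_natCast c 2,
          ← Real.rpow_mul hc0, show ((2:ℕ):ℝ) * ((1:ℝ)/2) = 1 by norm_num, Real.rpow_one]

theorem rpow16_pow6 {x : ℝ} (hx : 0 ≤ x) : (x ^ ((1:ℝ)/6))^(6:ℕ) = x := by
  rw [← Real.rpow_natCast (x ^ ((1:ℝ)/6)) 6, ← Real.rpow_mul hx,
    show ((1:ℝ)/6 * ((6:ℕ):ℝ)) = 1 by norm_num, Real.rpow_one]

theorem rpow16_pow5 {x : ℝ} (hx : 0 ≤ x) : (x ^ ((1:ℝ)/6))^(5:ℕ) = x ^ ((5:ℝ)/6) := by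
  rw [← Real.rpow_natCast (x ^ ((1:ℝ)/6)) 5, ← Real.rpow_mul hx]
  norm_num

theorem pow6_rpow16 {x : ℝ} (hx : 0 ≤ x) : (x^(6:ℕ)) ^ ((1:ℝ)/6) = x := by
  rw [← Real.rpow_natCast x 6, ← Real.rpow_mul hx,
    show (((6:ℕ):ℝ) * ((1:ℝ)/6)) = 1 by norm_num, Real.rpow_one]

theorem stmt_17 (n : ℕ) (hn : 1 ≤ n)
    (H : ∀ ε : ℝ, 0 < ε → ∃ C : ℝ, 0 < C ∧ ∀ (N : ℕ), 1 ≤ N → ∀ (a : ℕ → ℂ),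
      (∫ t in (0:ℝ)..(2*π), ∫ θ in (0:ℝ)..(2*π),
          ‖∑ k ∈ Finset.range N,
              a k * Complex.exp (-Complex.I * t * (k * (k + (n-1):ℕ)))
                  * Complex.exp (Complex.I * k * θ)‖^6) ^ ((1:ℝ)/6)
        ≤ C * (N : ℝ) ^ ε * (∑ k ∈ Finset.range N, ‖a k‖^2) ^ ((1:ℝ)/2)) :
    ∀ ε : ℝ, 0 < ε → ∃ C' : ℝ, 0 < C' ∧ ∀ (N : ℕ), 1 ≤ N → ∀ (a : ℕ → ℂ),
      (∫ θ in (0:ℝ)..(2*π),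
          (⨆ t ∈ Set.Icc (0:ℝ) (2*π),
            ‖∑ k ∈ Finset.range N,
                a k * Complex.exp (-Complex.I * t * (k * (k + (n-1):ℕ)))
                    * Complex.exp (Complex.I * k * θ)‖)^6) ^ ((1:ℝ)/6)
        ≤ C' * (N : ℝ) ^ ((1:ℝ)/3 + ε)
            * (∑ k ∈ Finset.range N, ‖a k‖^2) ^ ((1:ℝ)/2) := by
  intro ε hε
  obtain ⟨C, hC, hCall⟩ := H ε hε
  refine ⟨(25*((n:ℝ)+1)) ^ ((1:ℝ)/6) * C, by positivity, ?_⟩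
  intro N hN a
  have hπ : (0:ℝ) ≤ 2*π := by positivity
  have hN1R : (1:ℝ) ≤ (N:ℝ) := by exact_mod_cast hN
  have hN0 : (0:ℝ) < (N:ℝ) := by linarith
  show (∫ θ in (0:ℝ)..(2*π),
          (⨆ t ∈ Set.Icc (0:ℝ) (2*π), ‖MVF n N a t θ‖)^6) ^ ((1:ℝ)/6)
        ≤ (25*((n:ℝ)+1)) ^ ((1:ℝ)/6) * C * (N : ℝ) ^ ((1:ℝ)/3 + ε)
            * (∑ k ∈ Finset.range N, ‖a k‖^2) ^ ((1:ℝ)/2)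
  set P : ℝ := (∑ k ∈ Finset.range N, ‖a k‖^2) ^ ((1:ℝ)/2) with hP
  have hP0 : 0 ≤ P := Real.rpow_nonneg (Finset.sum_nonneg fun k _ => sq_nonneg _) _
  set M : ℝ := C * (N:ℝ)^ε * P with hM
  have hM0 : 0 ≤ M := by positivity
  set A : ℝ → ℝ := fun θ => ∫ s in (0:ℝ)..(2*π), ‖MVF n N a s θ‖^6 with hA
  set B : ℝ → ℝ := fun θ => ∫ s in (0:ℝ)..(2*π), ‖MVF n N (MVda n a) s θ‖^6 with hB
  set A6 : ℝ := ∫ t in (0:ℝ)..(2*π), ∫ θ in (0:ℝ)..(2*π), ‖MVF n N a t θ‖^6 with hA6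
  set B6 : ℝ := ∫ t in (0:ℝ)..(2*π), ∫ θ in (0:ℝ)..(2*π), ‖MVF n N (MVda n a) t θ‖^6 with hB6
  have hA60 : 0 ≤ A6 := by
    rw [hA6]
    exact intervalIntegral.integral_nonneg hπ (fun t _ =>
      intervalIntegral.integral_nonneg hπ (fun θ _ => by positivity))
  have hB60 : 0 ≤ B6 := by
    rw [hB6]
    exact intervalIntegral.integral_nonneg hπ (fun t _ =>
      intervalIntegral.integral_nonneg hπ (fun θ _ => by positivity))
  have hA6le : A6 ^ ((1:ℝ)/6) ≤ M := hCall N hN a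
  have hB6le : B6 ^ ((1:ℝ)/6) ≤ ((n:ℝ)+1)*(N:ℝ)^2 * M := by
    have h1 := hCall N hN (MVda n a)
    have h2 := MVda_sum_le n N hN a
    calc B6 ^ ((1:ℝ)/6)
        ≤ C * (N:ℝ)^ε * (∑ k ∈ Finset.range N, ‖MVda n a k‖^2) ^ ((1:ℝ)/2) := h1
      _ ≤ C * (N:ℝ)^ε * (((n:ℝ)+1)*(N:ℝ)^2 * P) := by
          apply mul_le_mul_of_nonneg_left _ (by positivity)
          exact h2
      _ = ((n:ℝ)+1)*(N:ℝ)^2 * M := by rw [hM]; ring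
  have hswapA : (∫ θ in (0:ℝ)..(2*π), A θ) = A6 := by
    rw [hA6]
    exact (MV_swap (φ := fun t θ => ‖MVF n N a t θ‖^6) (by unfold MVF; fun_prop)).symm
  have hswapB : (∫ θ in (0:ℝ)..(2*π), B θ) = B6 := by
    rw [hB6]
    exact (MV_swap (φ := fun t θ => ‖MVF n N (MVda n a) t θ‖^6) (by unfold MVF; fun_prop)).symm
  have contA : Continuous A := MV_contA n N a
  have contB : Continuous B := MV_contA n N (MVda n a)
  have contA56 : Continuous (fun θ => (A θ) ^ ((5:ℝ)/6)) :=
    contA.rpow_const (fun x => Or.inr (by norm_num))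
  have contB16 : Continuous (fun θ => (B θ) ^ ((1:ℝ)/6)) :=
    contB.rpow_const (fun x => Or.inr (by norm_num))
  have conth : Continuous (fun θ => (2*π)⁻¹ * A θ + 24 * ((A θ) ^ ((5:ℝ)/6) * (B θ) ^ ((1:ℝ)/6))) :=
    (continuous_const.mul contA).add (continuous_const.mul (contA56.mul contB16))
  have hS60 : 0 ≤ ∫ θ in (0:ℝ)..(2*π), (⨆ t ∈ Set.Icc (0:ℝ) (2*π), ‖MVF n N a t θ‖)^6 :=
    intervalIntegral.integral_nonneg hπ (fun θ _ => by positivity)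
  have hRHS0 : (0:ℝ) ≤ (25*((n:ℝ)+1)) ^ ((1:ℝ)/6) * C * (N : ℝ) ^ ((1:ℝ)/3 + ε) * P := by
    positivity
  by_cases hS : IntervalIntegrable
      (fun θ => (⨆ t ∈ Set.Icc (0:ℝ) (2*π), ‖MVF n N a t θ‖)^6) volume 0 (2*π)
  · -- main case
    have hpt : ∀ θ ∈ Set.Icc (0:ℝ) (2*π),
        (⨆ t ∈ Set.Icc (0:ℝ) (2*π), ‖MVF n N a t θ‖)^6
          ≤ (2*π)⁻¹ * A θ + 24 * ((A θ) ^ ((5:ℝ)/6) * (B θ) ^ ((1:ℝ)/6)) := by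
      intro θ _
      refine le_trans (MV_sup6 n N a θ) ?_
      have h := MV_holder_t n N a (MVda n a) θ
      have h24 : 24 * (∫ s in (0:ℝ)..(2*π), ‖MVF n N a s θ‖^5 * ‖MVF n N (MVda n a) s θ‖)
          ≤ 24 * ((A θ) ^ ((5:ℝ)/6) * (B θ) ^ ((1:ℝ)/6)) := by
        apply mul_le_mul_of_nonneg_left h (by norm_num)
      exact add_le_add le_rfl h24
    have step1 : (∫ θ in (0:ℝ)..(2*π), (⨆ t ∈ Set.Icc (0:ℝ) (2*π), ‖MVF n N a t θ‖)^6)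
        ≤ ∫ θ in (0:ℝ)..(2*π), ((2*π)⁻¹ * A θ + 24 * ((A θ) ^ ((5:ℝ)/6) * (B θ) ^ ((1:ℝ)/6))) :=
      intervalIntegral.integral_mono_on hπ hS (conth.intervalIntegrable _ _) hpt
    have step2 : (∫ θ in (0:ℝ)..(2*π), ((2*π)⁻¹ * A θ + 24 * ((A θ) ^ ((5:ℝ)/6) * (B θ) ^ ((1:ℝ)/6))))
        = (2*π)⁻¹ * (∫ θ in (0:ℝ)..(2*π), A θ)
          + 24 * ∫ θ in (0:ℝ)..(2*π), (A θ) ^ ((5:ℝ)/6) * (B θ) ^ ((1:ℝ)/6) := by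
      rw [intervalIntegral.integral_add (f := fun θ => (2*π)⁻¹ * A θ)
        (g := fun θ => 24 * ((A θ) ^ ((5:ℝ)/6) * (B θ) ^ ((1:ℝ)/6))) ((continuous_const.mul contA).intervalIntegrable _ _)
        ((continuous_const.mul (contA56.mul contB16)).intervalIntegrable _ _),
        intervalIntegral.integral_const_mul, intervalIntegral.integral_const_mul]
    have step4 : (∫ θ in (0:ℝ)..(2*π), (A θ) ^ ((5:ℝ)/6) * (B θ) ^ ((1:ℝ)/6))
        ≤ A6 ^ ((5:ℝ)/6) * B6 ^ ((1:ℝ)/6) := by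
      have h := MV_holder_theta n N a (MVda n a)
      rw [← hswapA, ← hswapB]
      exact h
    set x : ℝ := A6 ^ ((1:ℝ)/6) with hx
    set y : ℝ := B6 ^ ((1:ℝ)/6) with hy
    have hx0 : 0 ≤ x := Real.rpow_nonneg hA60 _
    have hy0 : 0 ≤ y := Real.rpow_nonneg hB60 _
    have hx6 : x^(6:ℕ) = A6 := rpow16_pow6 hA60
    have hy6 : y^(6:ℕ) = B6 := rpow16_pow6 hB60
    have hx5 : x^(5:ℕ) = A6 ^ ((5:ℝ)/6) := rpow16_pow5 hA60
    have hinv : (2*π)⁻¹ ≤ 1 := by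
      apply inv_le_one_of_one_le₀
      nlinarith [Real.pi_gt_three]
    have hxM : x^(6:ℕ) ≤ M^6 := pow_le_pow_left₀ hx0 hA6le 6
    have hx5M : x^(5:ℕ) ≤ M^5 := pow_le_pow_left₀ hx0 hA6le 5
    have hx5y : x^(5:ℕ) * y ≤ M^5 * (((n:ℝ)+1)*(N:ℝ)^2 * M) :=
      mul_le_mul hx5M hB6le hy0 (by positivity)
    have h1 : (1:ℝ) ≤ ((n:ℝ)+1)*(N:ℝ)^2 := by nlinarith [Nat.cast_nonneg (α := ℝ) n]
    have hq : (2*π)⁻¹ * A6 + 24 * (A6 ^ ((5:ℝ)/6) * B6 ^ ((1:ℝ)/6))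
        ≤ 25*((n:ℝ)+1)*(N:ℝ)^2 * M^6 := by
      rw [← hx5, ← hy, ← hx6]
      have e1 : M^5 * (((n:ℝ)+1)*(N:ℝ)^2 * M) = ((n:ℝ)+1)*(N:ℝ)^2*M^6 := by ring
      have e2 : (2*π)⁻¹ * x^(6:ℕ) ≤ x^(6:ℕ) := by
        nlinarith [pow_nonneg hx0 6]
      have e3 : M^6 ≤ ((n:ℝ)+1)*(N:ℝ)^2*M^6 := by nlinarith [pow_nonneg hM0 6]
      nlinarith [hx5y]
    have htot : (∫ θ in (0:ℝ)..(2*π), (⨆ t ∈ Set.Icc (0:ℝ) (2*π), ‖MVF n N a t θ‖)^6)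
        ≤ 25*((n:ℝ)+1)*(N:ℝ)^2 * M^6 := by
      have := le_trans step1 (le_of_eq step2)
      have h24 : 24 * (∫ θ in (0:ℝ)..(2*π), (A θ) ^ ((5:ℝ)/6) * (B θ) ^ ((1:ℝ)/6))
          ≤ 24 * (A6 ^ ((5:ℝ)/6) * B6 ^ ((1:ℝ)/6)) :=
        mul_le_mul_of_nonneg_left step4 (by norm_num)
      rw [hswapA] at this
      linarith
    calc (∫ θ in (0:ℝ)..(2*π), (⨆ t ∈ Set.Icc (0:ℝ) (2*π), ‖MVF n N a t θ‖)^6) ^ ((1:ℝ)/6)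
        ≤ (25*((n:ℝ)+1)*(N:ℝ)^2 * M^6) ^ ((1:ℝ)/6) :=
          Real.rpow_le_rpow hS60 htot (by norm_num)
      _ = (25*((n:ℝ)+1)) ^ ((1:ℝ)/6) * ((N:ℝ)^2) ^ ((1:ℝ)/6) * M := by
          rw [Real.mul_rpow (by positivity) (pow_nonneg hM0 6),
            Real.mul_rpow (by positivity) (by positivity), pow6_rpow16 hM0]
      _ = (25*((n:ℝ)+1)) ^ ((1:ℝ)/6) * C * (N : ℝ) ^ ((1:ℝ)/3 + ε) * P := by
          rw [show ((N:ℝ)^2) ^ ((1:ℝ)/6) = (N:ℝ) ^ ((1:ℝ)/3) by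
            rw [← Real.rpow_natCast (N:ℝ) 2, ← Real.rpow_mul hN0.le]
            norm_num,
            Real.rpow_add hN0 ((1:ℝ)/3) ε, hM]
          ring
  · rw [intervalIntegral.integral_undef hS, Real.zero_rpow (by norm_num)]
    exact hRHS0
end
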